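/- arXiv:math/0504388 — 6 statements merged into one kernel-verified Lean document; each statement's English description precedes it below -/
import Mathlib

section
/- For every prime p and every integer k with p+2 ≤ k ≤ 2p−1, write (λ₋ · λ₊⁻¹)^{k−1} = Σ_{i≥0} c_i X^i in ℚ_p[[X]]. Then p·c_i lies in ℤ_p for every i with 0 ≤ i ≤ k−2. (Equivalently, in the paper's formulation: if a_p has p-adic valuation 1 and one writes a_p(λ₋/λ₊)^{k−1} = Σ α_i X^i, then v_p(α_i) ≥ 0 for i ∈ {0,…,k−2}.) -/
open PowerSeries

/-- `qSeries p n` is the polynomial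
`q_n = ((1+X)^(p^n) - 1)/((1+X)^(p^(n-1)) - 1) = Φ_p((1+X)^(p^(n-1)))`,
viewed as a power series over `ℚ_p`. -/
noncomputable def qSeries (p : ℕ) [Fact p.Prime] (n : ℕ) : PowerSeries ℚ_[p] :=
  ∑ j ∈ Finset.range p, ((1 + PowerSeries.X) ^ (p ^ (n - 1))) ^ j

/-- The product topology of coefficientwise convergence on `ℚ_p[[X]]`. -/
noncomputable def coeffTopology (p : ℕ) [Fact p.Prime] :
    TopologicalSpace (PowerSeries ℚ_[p]) :=
  TopologicalSpace.induced (fun f n => (PowerSeries.coeff (R := ℚ_[p]) n) f) Pi.topologicalSpace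

/-- `λ₊ = ∏_{n ≥ 1} q_{2n}/p` in `ℚ_p[[X]]`. -/
noncomputable def lambdaPlus (p : ℕ) [Fact p.Prime] : PowerSeries ℚ_[p] :=
  letI := coeffTopology p
  ∏' n : ℕ, ((p : ℚ_[p])⁻¹ • qSeries p (2 * (n + 1)))

/-- `λ₋ = ∏_{n ≥ 1} q_{2n-1}/p` in `ℚ_p[[X]]`. -/
noncomputable def lambdaMinus (p : ℕ) [Fact p.Prime] : PowerSeries ℚ_[p] :=
  letI := coeffTopology p
  ∏' n : ℕ, ((p : ℚ_[p])⁻¹ • qSeries p (2 * n + 1))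


open Filter
section
variable (p : ℕ) [hp : Fact p.Prime]

lemma coeff_one_add_X_pow' (m i : ℕ) :
    (PowerSeries.coeff (R := ℚ_[p]) i) ((1 + PowerSeries.X) ^ m) = (m.choose i : ℚ_[p]) := by
  have : ((1 + PowerSeries.X : PowerSeries ℚ_[p])) ^ m
      = (((1 + Polynomial.X : Polynomial ℚ_[p]) ^ m : Polynomial ℚ_[p]) : PowerSeries ℚ_[p]) := by
    push_cast
    simp
  rw [this, Polynomial.coeff_coe, Polynomial.coeff_one_add_X_pow]

lemma coeff_qSeries (n i : ℕ) :
    (coeff (R := ℚ_[p]) i) (qSeries p n) = ∑ j ∈ Finset.range p, ((p ^ (n-1) * j).choose i : ℚ_[p]) := by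
  unfold qSeries
  rw [map_sum]
  refine Finset.sum_congr rfl fun j _ => ?_
  rw [← pow_mul, coeff_one_add_X_pow']

lemma coeff_zero_qSeries (n : ℕ) : (coeff (R := ℚ_[p]) 0) (qSeries p n) = (p : ℚ_[p]) := by
  rw [coeff_qSeries]
  simp

lemma norm_choose_le (m i e : ℕ) (hi : 0 < i) (he : (p:ℕ)^e ∣ m) :
    ‖((m.choose i : ℕ) : ℚ_[p])‖ ≤ (p:ℝ) ^ (padicValNat p i) * ((p:ℝ)⁻¹) ^ e := by
  have hp1 : 1 < p := hp.out.one_lt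
  have hppos : (0:ℝ) < p := by positivity
  set v := padicValNat p i with hv
  have hdvd : (p:ℕ)^v ∣ i := pow_padicValNat_dvd
  have key : (p:ℕ)^e ∣ i * m.choose i := by
    have h1 : i * m.choose i = m * (m-1).choose (i-1) := by
      cases m with
      | zero => cases i with
        | zero => omega
        | succ i' => simp [Nat.choose_eq_zero_of_lt (Nat.succ_pos i')]
      | succ m' =>
        cases i with
        | zero => omega
        | succ i' =>
          simp only [Nat.succ_sub_one]
          rw [mul_comm]
          exact (Nat.add_one_mul_choose_eq m' i').symm
    rw [h1]
    exact he.mul_right _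
  rcases le_or_gt e v with hev | hve
  · calc ‖((m.choose i : ℕ) : ℚ_[p])‖ ≤ 1 := by
          exact_mod_cast Padic.norm_int_le_one (m.choose i : ℤ)
      _ ≤ (p:ℝ) ^ v * ((p:ℝ)⁻¹) ^ e := by
          rw [inv_pow, ← div_eq_mul_inv, le_div_iff₀ (by positivity), one_mul]
          exact pow_le_pow_right₀ (by exact_mod_cast hp1.le) hev
  · have hi0 : (p:ℕ)^v * (i / p^v) = i := Nat.mul_div_cancel' hdvd
    have hndvd : ¬ (p:ℕ) ∣ (i / p^v) := by
      have := Nat.not_dvd_ordCompl hp.out hi.ne'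
      rwa [Nat.factorization_def _ hp.out] at this
    have key2 : (p:ℕ)^(e - v) ∣ (i / p^v) * m.choose i := by
      have h2 : (p:ℕ)^v * ((p:ℕ)^(e-v)) ∣ (p:ℕ)^v * ((i / p^v) * m.choose i) := by
        rw [← pow_add]
        have : v + (e - v) = e := by omega
        rw [this, ← mul_assoc, hi0]
        exact key
      exact (mul_dvd_mul_iff_left (pow_pos hp.out.pos v).ne').mp h2
    have key3 : (p:ℕ)^(e - v) ∣ m.choose i := by
      refine (Nat.Coprime.pow_left _ ((Nat.Prime.coprime_iff_not_dvd hp.out).mpr hndvd)).dvd_of_dvd_mul_left key2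
    have hnorm : ‖((m.choose i : ℕ) : ℚ_[p])‖ ≤ (p:ℝ) ^ (-(e - v : ℕ) : ℤ) := by
      have := (Padic.norm_int_le_pow_iff_dvd (m.choose i : ℤ) (e - v)).mpr
        (by exact_mod_cast Int.natCast_dvd_natCast.mpr key3)
      exact_mod_cast this
    refine hnorm.trans (le_of_eq ?_)
    have hppne : (p:ℝ) ≠ 0 := by positivity
    rw [zpow_neg, zpow_natCast, inv_pow, inv_eq_iff_eq_inv, mul_inv, inv_inv]
    field_simp
    rw [← pow_add]
    congr 1
    omega

lemma norm_coeff_qSeries (n i : ℕ) (hi : 0 < i) :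
    ‖(coeff (R := ℚ_[p]) i) (qSeries p n)‖ ≤ (i:ℝ) * ((p:ℝ)⁻¹) ^ (n - 1) := by
  have hp1 : 1 < p := hp.out.one_lt
  rw [coeff_qSeries]
  refine IsUltrametricDist.norm_sum_le_of_forall_le_of_nonneg (by positivity) fun j _ => ?_
  refine (norm_choose_le p _ i (n-1) hi (Dvd.dvd.mul_right dvd_rfl j)).trans ?_
  have h1 : (p:ℝ) ^ (padicValNat p i) ≤ (i:ℝ) := by
    exact_mod_cast Nat.le_of_dvd hi pow_padicValNat_dvd
  have h2 : (0:ℝ) ≤ ((p:ℝ)⁻¹) ^ (n-1) := by positivity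
  exact mul_le_mul_of_nonneg_right h1 h2
end

section
variable (p : ℕ) [hp : Fact p.Prime]

lemma lucas_sum (hp3 : 3 ≤ p) : (p:ℕ) ∣ ∑ j ∈ Finset.range p, (p * j).choose p := by
  have hp0 : 0 < p := by omega
  have h0 : ((∑ j ∈ Finset.range p, (p * j).choose p : ℕ) : ZMod p)
      = ((∑ j ∈ Finset.range p, j : ℕ) : ZMod p) := by
    push_cast
    refine Finset.sum_congr rfl fun j _ => ?_
    have h := Choose.choose_modEq_choose_mod_mul_choose_div_nat (p := p) (n := p*j) (k := p)
    rw [Nat.mul_mod_right, Nat.mod_self, Nat.mul_div_cancel_left _ hp0, Nat.div_self hp0] at h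
    rw [Nat.choose_self, Nat.choose_one_right, one_mul] at h
    exact (ZMod.natCast_eq_natCast_iff _ _ _).mpr h
  have h1 : ((∑ j ∈ Finset.range p, j : ℕ) : ZMod p) = 0 := by
    have hg : (∑ j ∈ Finset.range p, j) = p * ((p-1)/2) := by
      have h2 : (∑ j ∈ Finset.range p, j) * 2 = p * (p - 1) := Finset.sum_range_id_mul_two p
      have hodd : (p - 1) % 2 = 0 := by
        rcases hp.out.eq_two_or_odd with h | h <;> omega
      have h3 : ((p-1)/2) * 2 = p - 1 := by omega
      have h4 : p * (p - 1) = p * ((p-1)/2) * 2 := by rw [mul_assoc, h3]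
      rw [h4] at h2
      omega
    rw [hg]
    push_cast
    simp
  have := h0.trans h1
  exact (ZMod.natCast_eq_zero_iff _ _).mp this
end

section
variable (p : ℕ) [hp : Fact p.Prime]

lemma norm_coeff_q_le_inv (hp3 : 3 ≤ p) (n : ℕ) (hn : 2 ≤ n) (j : ℕ) (hj : j ≤ 2*p - 3) :
    ‖(coeff (R := ℚ_[p]) j) (qSeries p n)‖ ≤ ((p:ℝ))⁻¹ := by
  have hp1 : 1 < p := hp.out.one_lt
  have hppos : (0:ℝ) < p := by positivity
  have hρ0 : (0:ℝ) ≤ (p:ℝ)⁻¹ := by positivity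
  have hρ1 : (p:ℝ)⁻¹ ≤ 1 := by
    rw [inv_le_one_iff₀]; right; exact_mod_cast hp1.le
  rcases Nat.eq_zero_or_pos j with rfl | hj0
  · rw [coeff_zero_qSeries]
    rw [Padic.norm_p]
  by_cases hpj : (p:ℕ) ∣ j
  · -- j = p
    have hjp : j = p := by
      obtain ⟨c, rfl⟩ := hpj
      rcases Nat.lt_or_ge c 2 with hc | hc
      · interval_cases c <;> omega
      · exfalso
        have : p * 2 ≤ p * c := Nat.mul_le_mul_left p hc
        omega
    rw [hjp]
    rcases Nat.lt_or_ge n 3 with hn3 | hn3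
    · -- n = 2 : Lucas
      have hn2 : n = 2 := by omega
      subst hn2
      rw [coeff_qSeries]
      have hcast : (∑ j ∈ Finset.range p, ((p ^ (2-1) * j).choose p : ℚ_[p]))
          = ((∑ j ∈ Finset.range p, (p * j).choose p : ℕ) : ℚ_[p]) := by
        push_cast
        simp
      rw [hcast]
      have hdvd := lucas_sum p hp3
      have hdvd1 : ((p:ℤ))^1 ∣ ((∑ j ∈ Finset.range p, (p * j).choose p : ℕ) : ℤ) := by
        rw [pow_one]
        exact_mod_cast Int.natCast_dvd_natCast.mpr hdvd
      have := (Padic.norm_int_le_pow_iff_dvd ((∑ j ∈ Finset.range p, (p * j).choose p : ℕ) : ℤ) 1).mpr hdvd1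
      have h2 : ((p:ℝ)) ^ (-(1:ℕ) : ℤ) = (p:ℝ)⁻¹ := by
        rw [zpow_neg, zpow_natCast, pow_one]
      rw [h2] at this
      exact_mod_cast this
    · -- n ≥ 3
      rw [coeff_qSeries]
      refine IsUltrametricDist.norm_sum_le_of_forall_le_of_nonneg hρ0 fun j' _ => ?_
      refine (norm_choose_le p _ p (n-1) (by omega) (Dvd.dvd.mul_right dvd_rfl j')).trans ?_
      rw [padicValNat.self hp1, pow_one]
      calc (p:ℝ) * ((p:ℝ)⁻¹)^(n-1) ≤ (p:ℝ) * ((p:ℝ)⁻¹)^2 := by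
            refine mul_le_mul_of_nonneg_left (pow_le_pow_of_le_one hρ0 hρ1 (by omega)) (le_of_lt hppos)
        _ = (p:ℝ)⁻¹ * ((p:ℝ) * (p:ℝ)⁻¹) := by ring
        _ = (p:ℝ)⁻¹ := by rw [mul_inv_cancel₀ hppos.ne', mul_one]
  · -- p ∤ j
    rw [coeff_qSeries]
    refine IsUltrametricDist.norm_sum_le_of_forall_le_of_nonneg hρ0 fun j' _ => ?_
    refine (norm_choose_le p _ j (n-1) hj0 (Dvd.dvd.mul_right dvd_rfl j')).trans ?_
    rw [padicValNat.eq_zero_of_not_dvd hpj, pow_zero, one_mul]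
    calc ((p:ℝ)⁻¹)^(n-1) ≤ ((p:ℝ)⁻¹)^1 := pow_le_pow_of_le_one hρ0 hρ1 (by omega)
      _ = (p:ℝ)⁻¹ := pow_one _

lemma coeff_smul_q (m j : ℕ) :
    (coeff (R := ℚ_[p]) j) ((p : ℚ_[p])⁻¹ • qSeries p m) = (p : ℚ_[p])⁻¹ * (coeff (R := ℚ_[p]) j) (qSeries p m) := by
  simp

lemma norm_p_inv : ‖((p : ℚ_[p]))⁻¹‖ = (p:ℝ) := by
  rw [norm_inv, Padic.norm_p, inv_inv]

lemma factor_int (hp3 : 3 ≤ p) (n : ℕ) (hn : 2 ≤ n) (j : ℕ) (hj : j ≤ 2*p - 3) :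
    ‖(coeff (R := ℚ_[p]) j) ((p : ℚ_[p])⁻¹ • qSeries p n)‖ ≤ 1 := by
  rw [coeff_smul_q, norm_mul, norm_p_inv]
  have h := norm_coeff_q_le_inv p hp3 n hn j hj
  have hppos : (0:ℝ) < p := by positivity
  calc (p:ℝ) * ‖(coeff (R := ℚ_[p]) j) (qSeries p n)‖ ≤ (p:ℝ) * (p:ℝ)⁻¹ :=
        mul_le_mul_of_nonneg_left h hppos.le
    _ = 1 := mul_inv_cancel₀ hppos.ne'

lemma factor_const (m : ℕ) :
    (coeff (R := ℚ_[p]) 0) ((p : ℚ_[p])⁻¹ • qSeries p m) = 1 := by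
  rw [coeff_smul_q, coeff_zero_qSeries]
  have : (p:ℚ_[p]) ≠ 0 := by
    exact_mod_cast (Nat.cast_ne_zero (R := ℚ_[p])).mpr hp.out.pos.ne'
  field_simp

lemma factor_sub_one_bound (m j : ℕ) (hm : 2 ≤ m) :
    ‖(coeff (R := ℚ_[p]) j) ((p : ℚ_[p])⁻¹ • qSeries p m - 1)‖ ≤ (j:ℝ) * ((p:ℝ)⁻¹)^(m-2) := by
  have hppos : (0:ℝ) < p := by exact_mod_cast hp.out.pos
  rcases Nat.eq_zero_or_pos j with rfl | hj0
  · rw [map_sub]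
    rw [factor_const, coeff_zero_eq_constantCoeff, map_one, sub_self, norm_zero]
    positivity
  · rw [map_sub]
    have : (coeff (R := ℚ_[p]) j) (1 : PowerSeries ℚ_[p]) = 0 := by
      rw [coeff_one, if_neg hj0.ne']
    rw [this, sub_zero, coeff_smul_q, norm_mul, norm_p_inv]
    have h := norm_coeff_qSeries p m j hj0
    calc (p:ℝ) * ‖(coeff (R := ℚ_[p]) j) (qSeries p m)‖ ≤ (p:ℝ) * ((j:ℝ) * ((p:ℝ)⁻¹)^(m-1)) :=
          mul_le_mul_of_nonneg_left h hppos.le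
      _ = (j:ℝ) * ((p:ℝ) * ((p:ℝ)⁻¹)^(m-1)) := by ring
      _ = (j:ℝ) * ((p:ℝ)⁻¹)^(m-2) := by
          rw [show m - 1 = 1 + (m - 2) by omega, pow_add, pow_one,
            ← mul_assoc (p:ℝ) (p:ℝ)⁻¹, mul_inv_cancel₀ hppos.ne', one_mul]
end

section
variable (p : ℕ) [hp : Fact p.Prime]

lemma norm_coeff_mul_le (f g : PowerSeries ℚ_[p]) (i : ℕ) (C D : ℝ) (hC : 0 ≤ C) (hD : 0 ≤ D)
    (hf : ∀ a ≤ i, ‖coeff (R := ℚ_[p]) a f‖ ≤ C) (hg : ∀ b ≤ i, ‖coeff (R := ℚ_[p]) b g‖ ≤ D) :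
    ‖coeff (R := ℚ_[p]) i (f * g)‖ ≤ C * D := by
  rw [coeff_mul]
  refine IsUltrametricDist.norm_sum_le_of_forall_le_of_nonneg (by positivity) fun x hx => ?_
  rw [Finset.HasAntidiagonal.mem_antidiagonal] at hx
  rw [norm_mul]
  exact mul_le_mul (hf x.1 (by omega)) (hg x.2 (by omega)) (norm_nonneg _) hC

lemma norm_coeff_one_le (j : ℕ) : ‖coeff (R := ℚ_[p]) j (1 : PowerSeries ℚ_[p])‖ ≤ 1 := by
  rw [coeff_one]
  split_ifs <;> simp

lemma norm_coeff_prod_sub_one_le (t : Finset ℕ) (g : ℕ → PowerSeries ℚ_[p]) (i : ℕ) (δ : ℝ)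
    (h0 : 0 ≤ δ) (h1 : δ ≤ 1)
    (hg : ∀ n ∈ t, ∀ j ≤ i, ‖coeff (R := ℚ_[p]) j (g n - 1)‖ ≤ δ) :
    ∀ j ≤ i, ‖coeff (R := ℚ_[p]) j (∏ n ∈ t, g n - 1)‖ ≤ δ := by
  induction t using Finset.cons_induction with
  | empty => intro j hj; simp [h0]
  | cons a t ha ih =>
    have hQ := ih (fun n hn j hj => hg n (Finset.mem_cons_of_mem hn) j hj)
    have hQb : ∀ b ≤ i, ‖coeff (R := ℚ_[p]) b (∏ n ∈ t, g n)‖ ≤ 1 := by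
      intro b hb
      have he : (∏ n ∈ t, g n) = ((∏ n ∈ t, g n) - 1) + 1 := by ring
      rw [he, map_add]
      refine (IsUltrametricDist.norm_add_le_max _ _).trans (max_le ((hQ b hb).trans h1) ?_)
      exact norm_coeff_one_le p b
    intro j hj
    rw [Finset.prod_cons]
    have key : g a * ∏ n ∈ t, g n - 1 = (g a - 1) * (∏ n ∈ t, g n) + ((∏ n ∈ t, g n) - 1) := by
      ring
    rw [key, map_add]
    refine (IsUltrametricDist.norm_add_le_max _ _).trans (max_le ?_ (hQ j hj))
    calc ‖coeff (R := ℚ_[p]) j ((g a - 1) * (∏ n ∈ t, g n))‖ ≤ δ * 1 :=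
          norm_coeff_mul_le p _ _ j δ 1 h0 zero_le_one
            (fun b hb => hg a (Finset.mem_cons_self a t) b (hb.trans hj))
            (fun b hb => hQb b (hb.trans hj))
      _ = δ := mul_one δ

lemma intU_mul (N : ℕ) (f g : PowerSeries ℚ_[p])
    (hf : ∀ j ≤ N, ‖coeff (R := ℚ_[p]) j f‖ ≤ 1) (hg : ∀ j ≤ N, ‖coeff (R := ℚ_[p]) j g‖ ≤ 1) :
    ∀ j ≤ N, ‖coeff (R := ℚ_[p]) j (f * g)‖ ≤ 1 := by
  intro j hj
  have := norm_coeff_mul_le p f g j 1 1 zero_le_one zero_le_one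
    (fun a ha => hf a (ha.trans hj)) (fun b hb => hg b (hb.trans hj))
  simpa using this

lemma intU_pow (N : ℕ) (f : PowerSeries ℚ_[p])
    (hf : ∀ j ≤ N, ‖coeff (R := ℚ_[p]) j f‖ ≤ 1) (m : ℕ) :
    ∀ j ≤ N, ‖coeff (R := ℚ_[p]) j (f ^ m)‖ ≤ 1 := by
  induction m with
  | zero => intro j hj; rw [pow_zero]; exact norm_coeff_one_le p j
  | succ m ih =>
    rw [pow_succ]
    exact intU_mul p N _ _ ih hf

lemma intU_prod (N : ℕ) (g : ℕ → PowerSeries ℚ_[p]) (t : Finset ℕ)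
    (hg : ∀ n ∈ t, ∀ j ≤ N, ‖coeff (R := ℚ_[p]) j (g n)‖ ≤ 1) :
    ∀ j ≤ N, ‖coeff (R := ℚ_[p]) j (∏ n ∈ t, g n)‖ ≤ 1 := by
  induction t using Finset.cons_induction with
  | empty => intro j hj; rw [Finset.prod_empty]; exact norm_coeff_one_le p j
  | cons a t ha ih =>
    intro j hj
    rw [Finset.prod_cons]
    exact intU_mul p N _ _ (hg a (Finset.mem_cons_self a t))
      (ih fun n hn => hg n (Finset.mem_cons_of_mem hn)) j hj

lemma intU_inv (N : ℕ) (f : PowerSeries ℚ_[p]) (h0 : constantCoeff (R := ℚ_[p]) f = 1)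
    (hf : ∀ j ≤ N, ‖coeff (R := ℚ_[p]) j f‖ ≤ 1) :
    ∀ j ≤ N, ‖coeff (R := ℚ_[p]) j (f⁻¹)‖ ≤ 1 := by
  intro j
  induction j using Nat.strong_induction_on with
  | _ j ih =>
    intro hj
    rw [PowerSeries.coeff_inv]
    split_ifs with hj0
    · rw [h0]; simp
    · rw [h0, inv_one, neg_one_mul, norm_neg]
      refine IsUltrametricDist.norm_sum_le_of_forall_le_of_nonneg zero_le_one fun x hx => ?_
      rw [Finset.HasAntidiagonal.mem_antidiagonal] at hx
      split_ifs with hx2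
      · rw [norm_mul]
        have h1 := hf x.1 (by omega)
        have h2 := ih x.2 hx2 (by omega)
        simpa using mul_le_mul h1 h2 (norm_nonneg _) zero_le_one
      · simp
end

section
variable (p : ℕ) [hp : Fact p.Prime]

lemma continuous_coeff' (j : ℕ) : letI := coeffTopology p;
    Continuous fun f : PowerSeries ℚ_[p] => coeff (R := ℚ_[p]) j f := by
  letI := coeffTopology p
  have h1 : Continuous (fun (f : PowerSeries ℚ_[p]) (n : ℕ) => coeff (R := ℚ_[p]) n f) :=
    continuous_induced_dom
  have h2 : Continuous (fun (g : ℕ → ℚ_[p]) => g j) := continuous_apply j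
  exact h2.comp h1

lemma t2' : letI := coeffTopology p; T2Space (PowerSeries ℚ_[p]) := by
  letI := coeffTopology p
  have : Topology.IsEmbedding (fun (f : PowerSeries ℚ_[p]) (n : ℕ) => (coeff (R := ℚ_[p]) n) f) :=
    ⟨⟨rfl⟩, fun f g h => PowerSeries.ext fun n => congrFun h n⟩
  exact this.t2Space

lemma continuousMul' : letI := coeffTopology p; ContinuousMul (PowerSeries ℚ_[p]) := by
  letI := coeffTopology p
  constructor
  rw [show (coeffTopology p) = TopologicalSpace.induced (fun f n => (PowerSeries.coeff (R := ℚ_[p]) n) f) Pi.topologicalSpace from rfl, continuous_induced_rng]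
  apply continuous_pi
  intro j
  have h : (fun (x : PowerSeries ℚ_[p] × PowerSeries ℚ_[p]) => coeff (R := ℚ_[p]) j (x.1 * x.2))
      = fun x => ∑ ab ∈ Finset.HasAntidiagonal.antidiagonal j, coeff (R := ℚ_[p]) ab.1 x.1 * coeff (R := ℚ_[p]) ab.2 x.2 := by
    funext x; exact coeff_mul j x.1 x.2
  show Continuous fun (x : PowerSeries ℚ_[p] × PowerSeries ℚ_[p]) => coeff (R := ℚ_[p]) j (x.1 * x.2)
  rw [h]
  exact continuous_finset_sum _ fun ab _ =>
    (((continuous_coeff' p ab.1).comp continuous_fst).mul ((continuous_coeff' p ab.2).comp continuous_snd))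

lemma tendsto_coeff_iff {ι : Type*} (l : Filter ι) (u : ι → PowerSeries ℚ_[p]) (a : PowerSeries ℚ_[p]) :
    letI := coeffTopology p
    Filter.Tendsto u l (nhds a) ↔ ∀ j, Filter.Tendsto (fun i => coeff (R := ℚ_[p]) j (u i)) l (nhds (coeff (R := ℚ_[p]) j a)) := by
  letI := coeffTopology p
  rw [show (nhds a) = Filter.comap (fun f n => (PowerSeries.coeff (R := ℚ_[p]) n) f) (nhds (fun n => coeff (R := ℚ_[p]) n a)) from nhds_induced _ _, Filter.tendsto_comap_iff, tendsto_pi_nhds]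
  exact Iff.rfl

lemma exists_hasProd (g : ℕ → PowerSeries ℚ_[p])
    (hg : ∀ n j, ‖coeff (R := ℚ_[p]) j (g n - 1)‖ ≤ ((j:ℝ)+1) * ((p:ℝ)⁻¹)^n) :
    ∃ u : PowerSeries ℚ_[p], letI := coeffTopology p; HasProd g u := by
  letI := coeffTopology p
  have hp1 : 1 < p := hp.out.one_lt
  have hppos : (0:ℝ) < p := by positivity
  set ρ : ℝ := (p:ℝ)⁻¹ with hρdef
  have hρ0 : 0 ≤ ρ := by positivity
  have hρ1 : ρ < 1 := by
    rw [hρdef, inv_lt_one_iff₀]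
    right; exact_mod_cast hp1
  set P : Finset ℕ → PowerSeries ℚ_[p] := fun s => ∏ n ∈ s, g n with hPdef
  have key : ∀ i : ℕ, ∃ x : ℚ_[p],
      Filter.Tendsto (fun s : Finset ℕ => coeff (R := ℚ_[p]) i (P s)) Filter.atTop (nhds x) := by
    intro i
    set Ci : ℝ := (i:ℝ) + 1 with hCidef
    have hCi0 : 0 < Ci := by positivity
    have hmono : ∀ n, ∀ j ≤ i, ‖coeff (R := ℚ_[p]) j (g n - 1)‖ ≤ Ci * ρ^n := by
      intro n j hj
      refine (hg n j).trans (mul_le_mul_of_nonneg_right ?_ (by positivity))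
      rw [hCidef]
      have : (j:ℝ) ≤ (i:ℝ) := by exact_mod_cast hj
      linarith
    have htend : Filter.Tendsto (fun n : ℕ => Ci * ρ^n) Filter.atTop (nhds 0) := by
      have h := tendsto_pow_atTop_nhds_zero_of_lt_one hρ0 hρ1
      simpa using h.const_mul Ci
    obtain ⟨M₀, hM₀'⟩ := (Filter.eventually_atTop.mp
      ((htend.eventually_lt_const one_pos).and (Filter.eventually_ge_atTop 0)))
    have hM₀ : ∀ n ≥ M₀, Ci * ρ^n ≤ 1 := fun n hn => ((hM₀' n hn).1).le
    have hsmall : ∀ M, M₀ ≤ M → ∀ (t : Finset ℕ), (∀ n ∈ t, M ≤ n) →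
        ∀ j ≤ i, ‖coeff (R := ℚ_[p]) j ((∏ n ∈ t, g n) - 1)‖ ≤ Ci * ρ^M := by
      intro M hM t ht
      refine norm_coeff_prod_sub_one_le p t g i (Ci * ρ^M) (by positivity) (hM₀ M hM) ?_
      intro n hn j hj
      refine (hmono n j hj).trans ?_
      exact mul_le_mul_of_nonneg_left (pow_le_pow_of_le_one hρ0 hρ1.le (ht n hn)) hCi0.le
    obtain ⟨B, hB1, hB⟩ : ∃ B : ℝ, 1 ≤ B ∧
        ∀ a ≤ i, ‖coeff (R := ℚ_[p]) a (P (Finset.range M₀))‖ ≤ B := by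
      refine ⟨(∑ a ∈ Finset.range (i+1), ‖coeff (R := ℚ_[p]) a (P (Finset.range M₀))‖) + 1, ?_, ?_⟩
      · have h0 : 0 ≤ ∑ a ∈ Finset.range (i+1), ‖coeff (R := ℚ_[p]) a (P (Finset.range M₀))‖ :=
          Finset.sum_nonneg fun _ _ => norm_nonneg _
        linarith
      · intro a ha
        have h1 : ‖coeff (R := ℚ_[p]) a (P (Finset.range M₀))‖
            ≤ ∑ b ∈ Finset.range (i+1), ‖coeff (R := ℚ_[p]) b (P (Finset.range M₀))‖ :=
          Finset.single_le_sum (f := fun b => ‖coeff (R := ℚ_[p]) b (P (Finset.range M₀))‖)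
            (fun b _ => norm_nonneg _) (Finset.mem_range.mpr (Nat.lt_succ_of_le ha))
        linarith
    have hQone : ∀ (t : Finset ℕ), (∀ n ∈ t, M₀ ≤ n) →
        ∀ b ≤ i, ‖coeff (R := ℚ_[p]) b (∏ n ∈ t, g n)‖ ≤ 1 := by
      intro t ht b hb
      have hd := hsmall M₀ le_rfl t ht b hb
      have he : (∏ n ∈ t, g n) = ((∏ n ∈ t, g n) - 1) + 1 := by ring
      rw [he, map_add]
      exact (IsUltrametricDist.norm_add_le_max _ _).trans
        (max_le (hd.trans (hM₀ M₀ le_rfl)) (norm_coeff_one_le p b))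
    have hPM : ∀ M, M₀ ≤ M → ∀ a ≤ i, ‖coeff (R := ℚ_[p]) a (P (Finset.range M))‖ ≤ B := by
      intro M hM a ha
      have hsplit : P (Finset.range M)
          = P (Finset.range M₀) * ∏ n ∈ Finset.range M \ Finset.range M₀, g n := by
        rw [hPdef]
        dsimp only
        rw [← Finset.prod_sdiff (Finset.range_subset_range.mpr hM)]
        ring
      rw [hsplit]
      have hQ1 := hQone (Finset.range M \ Finset.range M₀) (fun n hn => by
        rw [Finset.mem_sdiff, Finset.mem_range, Finset.mem_range] at hn; omega)
      have := norm_coeff_mul_le p _ _ a B 1 (by linarith) zero_le_one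
        (fun a' ha' => hB a' (ha'.trans ha)) (fun b hb => hQ1 b (hb.trans ha))
      simpa using this
    have hEST : ∀ M, M₀ ≤ M → ∀ s : Finset ℕ, Finset.range M ⊆ s →
        ‖coeff (R := ℚ_[p]) i (P s) - coeff (R := ℚ_[p]) i (P (Finset.range M))‖ ≤ B * (Ci * ρ^M) := by
      intro M hM s hs
      have hsplit : P s = P (Finset.range M) * ∏ n ∈ s \ Finset.range M, g n := by
        rw [hPdef]
        dsimp only
        rw [← Finset.prod_sdiff hs]
        ring
      have hdiff : coeff (R := ℚ_[p]) i (P s) - coeff (R := ℚ_[p]) i (P (Finset.range M))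
          = coeff (R := ℚ_[p]) i (P (Finset.range M) * ((∏ n ∈ s \ Finset.range M, g n) - 1)) := by
        rw [← map_sub]
        congr 1
        rw [hsplit]
        ring
      rw [hdiff]
      refine norm_coeff_mul_le p _ _ i B (Ci * ρ^M) (by linarith) (by positivity)
        (fun a ha => hPM M hM a ha) ?_
      exact hsmall M hM _ (fun n hn => by
        rw [Finset.mem_sdiff, Finset.mem_range] at hn; omega)
    have htend2 : Filter.Tendsto (fun M : ℕ => B * (Ci * ρ^M)) Filter.atTop (nhds 0) := by
      simpa using htend.const_mul B
    have hcauchy : CauchySeq (fun M : ℕ => coeff (R := ℚ_[p]) i (P (Finset.range M))) := by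
      rw [Metric.cauchySeq_iff']
      intro ε hε
      obtain ⟨N0, hN0⟩ := (Filter.eventually_atTop.mp
        ((htend2.eventually_lt_const hε).and (Filter.eventually_ge_atTop M₀)))
      refine ⟨N0, fun n hn => ?_⟩
      rw [dist_eq_norm]
      have h := hEST N0 (hN0 N0 le_rfl).2 (Finset.range n) (Finset.range_subset_range.mpr hn)
      exact lt_of_le_of_lt h (hN0 N0 le_rfl).1
    obtain ⟨x, hx⟩ := cauchySeq_tendsto_of_complete hcauchy
    refine ⟨x, ?_⟩
    rw [Metric.tendsto_nhds]
    intro ε hε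
    obtain ⟨N1, hN1⟩ := Metric.tendsto_atTop.mp hx (ε/2) (by linarith)
    obtain ⟨N2, hN2⟩ := (Filter.eventually_atTop.mp
      (((htend2.eventually_lt_const (show (0:ℝ) < ε/2 by linarith)).and
        (Filter.eventually_ge_atTop M₀)).and (Filter.eventually_ge_atTop N1)))
    have hN2' := hN2 N2 le_rfl
    refine Filter.eventually_atTop.mpr ⟨Finset.range N2, fun s hs => ?_⟩
    have hsub : Finset.range N2 ⊆ s := hs
    have hd1 := hEST N2 hN2'.1.2 s hsub
    calc dist (coeff (R := ℚ_[p]) i (P s)) x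
        ≤ dist (coeff (R := ℚ_[p]) i (P s)) (coeff (R := ℚ_[p]) i (P (Finset.range N2)))
          + dist (coeff (R := ℚ_[p]) i (P (Finset.range N2))) x := dist_triangle _ _ _
      _ < ε/2 + ε/2 := by
          refine add_lt_add_of_le_of_lt ?_ (hN1 N2 hN2'.2)
          rw [dist_eq_norm]
          exact hd1.trans hN2'.1.1.le
      _ = ε := by ring
  choose x hx using key
  refine ⟨PowerSeries.mk x, ?_⟩
  rw [HasProd, tendsto_coeff_iff]
  intro j
  simpa [PowerSeries.coeff_mk] using hx j
end

section
variable (p : ℕ) [hp : Fact p.Prime]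

lemma coeff_tprod_bound (g : ℕ → PowerSeries ℚ_[p]) (u : PowerSeries ℚ_[p])
    (h : letI := coeffTopology p; HasProd g u) (j : ℕ) (C : ℝ)
    (hC : ∀ s : Finset ℕ, ‖coeff (R := ℚ_[p]) j (∏ n ∈ s, g n)‖ ≤ C) :
    ‖coeff (R := ℚ_[p]) j u‖ ≤ C := by
  letI := coeffTopology p
  have ht : Filter.Tendsto (fun s : Finset ℕ => coeff (R := ℚ_[p]) j (∏ n ∈ s, g n))
      Filter.atTop (nhds (coeff (R := ℚ_[p]) j u)) :=
    ((tendsto_coeff_iff p Filter.atTop _ u).mp h) j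
  exact le_of_tendsto ht.norm (Filter.Eventually.of_forall hC)

lemma coeff_zero_tprod (g : ℕ → PowerSeries ℚ_[p]) (u : PowerSeries ℚ_[p])
    (h : letI := coeffTopology p; HasProd g u)
    (hg : ∀ n, coeff (R := ℚ_[p]) 0 (g n) = 1) :
    coeff (R := ℚ_[p]) 0 u = 1 := by
  letI := coeffTopology p
  have ht := ((tendsto_coeff_iff p Filter.atTop _ u).mp h) 0
  have heq : (fun s : Finset ℕ => coeff (R := ℚ_[p]) 0 (∏ n ∈ s, g n)) = fun _ => (1 : ℚ_[p]) := by
    funext s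
    rw [coeff_zero_eq_constantCoeff, map_prod]
    refine Finset.prod_eq_one fun n _ => ?_
    rw [← coeff_zero_eq_constantCoeff_apply]
    exact hg n
  rw [heq] at ht
  exact tendsto_nhds_unique ht tendsto_const_nhds

lemma lambdaPlus_spec (hp3 : 3 ≤ p) :
    (∀ j ≤ 2*p-3, ‖coeff (R := ℚ_[p]) j (lambdaPlus p)‖ ≤ 1) ∧
      constantCoeff (R := ℚ_[p]) (lambdaPlus p) = 1 := by
  have hppos : (0:ℝ) < p := by exact_mod_cast hp.out.pos
  set g : ℕ → PowerSeries ℚ_[p] := fun n => (p:ℚ_[p])⁻¹ • qSeries p (2*(n+1)) with hgdef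
  have hhyp : ∀ n j, ‖coeff (R := ℚ_[p]) j (g n - 1)‖ ≤ ((j:ℝ)+1) * ((p:ℝ)⁻¹)^n := by
    intro n j
    refine (factor_sub_one_bound p (2*(n+1)) j (by omega)).trans ?_
    have h1 : ((p:ℝ)⁻¹)^(2*(n+1)-2) ≤ ((p:ℝ)⁻¹)^n :=
      pow_le_pow_of_le_one (by positivity) (by
        rw [inv_le_one_iff₀]; right; exact_mod_cast hp.out.one_lt.le) (by omega)
    have h2 : (j:ℝ) ≤ (j:ℝ) + 1 := by linarith
    exact mul_le_mul h2 h1 (by positivity) (by positivity)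
  obtain ⟨u, hu⟩ := exists_hasProd p g hhyp
  letI := coeffTopology p
  haveI := t2' p
  have hlam : lambdaPlus p = u := hu.tprod_eq
  constructor
  · intro j hj
    rw [hlam]
    refine coeff_tprod_bound p g u hu j 1 fun s => ?_
    refine intU_prod p (2*p-3) g s ?_ j hj
    intro n hn j' hj'
    exact factor_int p hp3 (2*(n+1)) (by omega) j' hj'
  · rw [hlam, ← coeff_zero_eq_constantCoeff_apply]
    exact coeff_zero_tprod p g u hu fun n => factor_const p (2*(n+1))

lemma lambdaMinus_spec (hp3 : 3 ≤ p) :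
    ∃ uminus : PowerSeries ℚ_[p], lambdaMinus p = ((p:ℚ_[p])⁻¹ • qSeries p 1) * uminus ∧
      (∀ j ≤ 2*p-3, ‖coeff (R := ℚ_[p]) j uminus‖ ≤ 1) := by
  set f : ℕ → PowerSeries ℚ_[p] := fun n => (p:ℚ_[p])⁻¹ • qSeries p (2*n+1) with hfdef
  set f'' : ℕ → PowerSeries ℚ_[p] := fun n => if n = 0 then 1 else f n with hf''def
  have hhyp : ∀ n j, ‖coeff (R := ℚ_[p]) j (f (n+1) - 1)‖ ≤ ((j:ℝ)+1) * ((p:ℝ)⁻¹)^n := by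
    intro n j
    refine (factor_sub_one_bound p (2*(n+1)+1) j (by omega)).trans ?_
    have h1 : ((p:ℝ)⁻¹)^(2*(n+1)+1-2) ≤ ((p:ℝ)⁻¹)^n :=
      pow_le_pow_of_le_one (by positivity) (by
        rw [inv_le_one_iff₀]; right; exact_mod_cast hp.out.one_lt.le) (by omega)
    have h2 : (j:ℝ) ≤ (j:ℝ) + 1 := by linarith
    exact mul_le_mul h2 h1 (by positivity) (by positivity)
  obtain ⟨u, hu⟩ := exists_hasProd p (fun n => f (n+1)) hhyp
  letI := coeffTopology p
  haveI := t2' p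
  haveI := continuousMul' p
  have hcomp : (f'' ∘ Nat.succ) = fun n => f (n+1) := by
    funext n
    simp only [Function.comp_apply, hf''def]
    exact if_neg (Nat.succ_ne_zero n)
  have hu'' : HasProd f'' u := by
    refine (Function.Injective.hasProd_iff Nat.succ_injective ?_).mp ?_
    · intro x hx
      have hx0 : x = 0 := by
        cases x with
        | zero => rfl
        | succ y => exact absurd ⟨y, rfl⟩ hx
      rw [hx0, hf''def]
      simp
    · rw [hcomp]
      exact hu
  have hsingle : HasProd (fun n : ℕ => if n = 0 then f 0 else 1) (f 0) := by
    have h := hasProd_single (f := fun n : ℕ => if n = 0 then f 0 else 1) 0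
      (fun b hb => if_neg hb)
    simpa using h
  have hmul : HasProd f (f 0 * u) := by
    have h := hsingle.mul hu''
    refine h.congr_fun fun n => ?_
    by_cases hn : n = 0
    · subst hn
      simp [hf''def]
    · simp [hf''def, hn]
  refine ⟨u, ?_, ?_⟩
  · have hlam : lambdaMinus p = f 0 * u := hmul.tprod_eq
    rw [hlam, hfdef]
  · intro j hj
    refine coeff_tprod_bound p f'' u hu'' j 1 fun s => ?_
    refine intU_prod p (2*p-3) f'' s ?_ j hj
    intro n hn j' hj'
    by_cases hn0 : n = 0
    · rw [hf''def]
      simp only [if_pos hn0]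
      exact norm_coeff_one_le p j'
    · rw [hf''def]
      simp only [if_neg hn0]
      exact factor_int p hp3 (2*n+1) (by omega) j' hj'

lemma coeff_qSeries_one (j : ℕ) :
    coeff (R := ℚ_[p]) j (qSeries p 1) = ((p.choose (j+1) : ℕ) : ℚ_[p]) := by
  have hp0 : 0 < p := hp.out.pos
  rw [coeff_qSeries]
  have hnat : ∑ j' ∈ Finset.range p, (j'.choose j) = p.choose (j+1) := by
    rcases le_or_gt p j with h | h
    · rw [Nat.choose_eq_zero_of_lt (by omega)]
      exact Finset.sum_eq_zero fun j' hj' =>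
        Nat.choose_eq_zero_of_lt (by rw [Finset.mem_range] at hj'; omega)
    · have hsub : Finset.Icc j (p-1) ⊆ Finset.range p := by
        intro x hx
        rw [Finset.mem_Icc] at hx
        rw [Finset.mem_range]
        omega
      rw [← Finset.sum_subset hsub (fun x hx hx2 => Nat.choose_eq_zero_of_lt (by
        rw [Finset.mem_range] at hx
        rw [Finset.mem_Icc] at hx2
        omega))]
      have := Nat.sum_Icc_choose (p-1) j
      rw [show p - 1 + 1 = p by omega] at this
      exact this
  rw [← hnat]
  push_cast
  refine Finset.sum_congr rfl fun j' _ => ?_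
  norm_num

lemma decompA (hp3 : 3 ≤ p) :
    ∀ j, ‖coeff (R := ℚ_[p]) j ((p:ℚ_[p])⁻¹ • qSeries p 1
      - (p:ℚ_[p])⁻¹ • (PowerSeries.X : PowerSeries ℚ_[p])^(p-1))‖ ≤ 1 := by
  intro j
  have hppos : (0:ℝ) < p := by exact_mod_cast hp.out.pos
  rw [map_sub]
  have h1 : (coeff (R := ℚ_[p]) j) ((p:ℚ_[p])⁻¹ • qSeries p 1)
      = (p:ℚ_[p])⁻¹ * ((p.choose (j+1) : ℕ) : ℚ_[p]) := by
    rw [coeff_smul_q, coeff_qSeries_one]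
  have h2 : (coeff (R := ℚ_[p]) j) ((p:ℚ_[p])⁻¹ • (PowerSeries.X : PowerSeries ℚ_[p])^(p-1))
      = (p:ℚ_[p])⁻¹ * (if j = p-1 then 1 else 0) := by
    rw [map_smul, smul_eq_mul, coeff_X_pow]
  rw [h1, h2]
  rcases lt_trichotomy j (p-1) with hj | hj | hj
  · rw [if_neg hj.ne, mul_zero, sub_zero, norm_mul, norm_p_inv]
    have hdvd : (p:ℕ) ∣ p.choose (j+1) := hp.out.dvd_choose_self (by omega) (by omega)
    have hdvd1 : ((p:ℤ))^1 ∣ ((p.choose (j+1) : ℕ) : ℤ) := by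
      rw [pow_one]
      exact_mod_cast Int.natCast_dvd_natCast.mpr hdvd
    have hn := (Padic.norm_int_le_pow_iff_dvd ((p.choose (j+1) : ℕ) : ℤ) 1).mpr hdvd1
    have h3 : ((p:ℝ)) ^ (-(1:ℕ) : ℤ) = (p:ℝ)⁻¹ := by
      rw [zpow_neg, zpow_natCast, pow_one]
    rw [h3] at hn
    have hn' : ‖((p.choose (j+1) : ℕ) : ℚ_[p])‖ ≤ (p:ℝ)⁻¹ := by exact_mod_cast hn
    calc (p:ℝ) * ‖((p.choose (j+1) : ℕ) : ℚ_[p])‖ ≤ (p:ℝ) * (p:ℝ)⁻¹ :=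
          mul_le_mul_of_nonneg_left hn' hppos.le
      _ = 1 := mul_inv_cancel₀ hppos.ne'
  · rw [if_pos hj, mul_one]
    have hchoose : p.choose (j+1) = 1 := by
      rw [show j + 1 = p by omega]
      exact Nat.choose_self p
    rw [hchoose]
    simp
  · rw [if_neg hj.ne', mul_zero, sub_zero]
    have hchoose : p.choose (j+1) = 0 := Nat.choose_eq_zero_of_lt (by omega)
    rw [hchoose]
    simp

end


/-- If `p + 2 ≤ k ≤ 2p - 1` and `(λ₋ · λ₊⁻¹)^(k-1) = Σ c_i X^i`, then
`p · c_i ∈ ℤ_p` for `0 ≤ i ≤ k - 2`. -/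
theorem padic_valuation_of_coeffs_of_lambda_ratio_pow
    (p : ℕ) [Fact p.Prime] (k : ℕ) (hk₁ : p + 2 ≤ k) (hk₂ : k ≤ 2 * p - 1) :
    ∀ i ≤ k - 2,
      ‖(p : ℚ_[p]) *
        PowerSeries.coeff (R := ℚ_[p]) i ((lambdaMinus p * (lambdaPlus p)⁻¹) ^ (k - 1))‖ ≤ 1 := by
  intro i hi
  have hp3 : 3 ≤ p := by omega
  have hppos : (0:ℝ) < p := by
    have := (Fact.out : p.Prime).pos
    exact_mod_cast this
  have hpne : (p:ℚ_[p]) ≠ 0 := by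
    exact_mod_cast (Nat.cast_ne_zero (R := ℚ_[p])).mpr (Fact.out : p.Prime).pos.ne'
  set N := 2*p - 3 with hN
  have hiN : i ≤ N := by omega
  obtain ⟨hplus, hconst⟩ := lambdaPlus_spec p hp3
  obtain ⟨u, hlamm, hu⟩ := lambdaMinus_spec p hp3
  have hinv : ∀ j ≤ N, ‖coeff (R := ℚ_[p]) j ((lambdaPlus p)⁻¹)‖ ≤ 1 :=
    intU_inv p N _ hconst hplus
  set W : PowerSeries ℚ_[p] := u * (lambdaPlus p)⁻¹ with hW
  have hWint : ∀ j ≤ N, ‖coeff (R := ℚ_[p]) j W‖ ≤ 1 := intU_mul p N _ _ hu hinv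
  set A : PowerSeries ℚ_[p] :=
    (p:ℚ_[p])⁻¹ • qSeries p 1 - (p:ℚ_[p])⁻¹ • (PowerSeries.X : PowerSeries ℚ_[p])^(p-1) with hA
  have hAint : ∀ j, ‖coeff (R := ℚ_[p]) j A‖ ≤ 1 := decompA p hp3
  set A' : PowerSeries ℚ_[p] := A * W with hA'
  have hA'int : ∀ j ≤ N, ‖coeff (R := ℚ_[p]) j A'‖ ≤ 1 :=
    intU_mul p N _ _ (fun j _ => hAint j) hWint
  set Y : PowerSeries ℚ_[p] :=
    (p:ℚ_[p])⁻¹ • ((PowerSeries.X : PowerSeries ℚ_[p])^(p-1) * W) with hY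
  have hq1 : (p:ℚ_[p])⁻¹ • qSeries p 1
      = A + (p:ℚ_[p])⁻¹ • (PowerSeries.X : PowerSeries ℚ_[p])^(p-1) := by
    rw [hA, sub_add_cancel]
  have hF : lambdaMinus p * (lambdaPlus p)⁻¹ = A' + Y := by
    calc lambdaMinus p * (lambdaPlus p)⁻¹
        = (((p:ℚ_[p])⁻¹ • qSeries p 1) * u) * (lambdaPlus p)⁻¹ := by rw [hlamm]
      _ = ((p:ℚ_[p])⁻¹ • qSeries p 1) * W := by rw [hW, mul_assoc]
      _ = (A + (p:ℚ_[p])⁻¹ • (PowerSeries.X : PowerSeries ℚ_[p])^(p-1)) * W := by rw [hq1]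
      _ = A' + Y := by rw [hA', hY, add_mul, smul_mul_assoc]
  rw [hF]
  set m := k - 1 with hm
  have hm4 : 4 ≤ m := by omega
  rw [add_pow, map_sum, Finset.mul_sum]
  refine IsUltrametricDist.norm_sum_le_of_forall_le_of_nonneg zero_le_one fun j hj => ?_
  rw [Finset.mem_range] at hj
  rcases Nat.lt_or_ge j (m-1) with hj2 | hj2
  · -- m - j ≥ 2 : the coefficient vanishes
    have ht2 : 2 ≤ m - j := by omega
    have hYpow : Y^(m-j) = ((p:ℚ_[p])⁻¹)^(m-j) •
        ((((PowerSeries.X : PowerSeries ℚ_[p])^(p-1))^(m-j)) * W^(m-j)) := by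
      rw [hY, smul_pow, mul_pow]
    have hrearr : A'^j * ((((PowerSeries.X : PowerSeries ℚ_[p])^(p-1))^(m-j)) * W^(m-j))
          * ((m.choose j : ℕ) : PowerSeries ℚ_[p])
        = (A'^j * W^(m-j) * ((m.choose j : ℕ) : PowerSeries ℚ_[p]))
          * (PowerSeries.X : PowerSeries ℚ_[p])^((p-1)*(m-j)) := by
      rw [pow_mul]
      ring
    have hni : ¬ ((p-1)*(m-j) ≤ i) := by
      have h2 : (p-1)*2 ≤ (p-1)*(m-j) := Nat.mul_le_mul_left _ ht2
      omega
    rw [hYpow, mul_smul_comm, smul_mul_assoc, map_smul, smul_eq_mul, hrearr,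
      coeff_mul_X_pow', if_neg hni, mul_zero, mul_zero, norm_zero]
    exact zero_le_one
  by_cases hjm : j = m
  · -- top term
    rw [hjm, Nat.sub_self, pow_zero, mul_one, Nat.choose_self, Nat.cast_one, mul_one, norm_mul]
    calc ‖(p:ℚ_[p])‖ * ‖coeff (R := ℚ_[p]) i (A'^m)‖ ≤ (p:ℝ)⁻¹ * 1 := by
          rw [Padic.norm_p]
          exact mul_le_mul_of_nonneg_left (intU_pow p N A' hA'int m i hiN) (by positivity)
      _ ≤ 1 := by
          rw [mul_one, inv_le_one_iff₀]
          right
          exact_mod_cast (Fact.out : p.Prime).one_lt.le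
  · -- j = m - 1 : the term with a single Y
    have hmj1 : m - j = 1 := by omega
    rw [hmj1, pow_one, hY, mul_smul_comm, smul_mul_assoc, map_smul, smul_eq_mul,
      ← mul_assoc, mul_inv_cancel₀ hpne, one_mul]
    have hre : A'^j * ((PowerSeries.X : PowerSeries ℚ_[p])^(p-1) * W)
          * ((m.choose j : ℕ) : PowerSeries ℚ_[p])
        = (A'^j * W * ((m.choose j : ℕ) : PowerSeries ℚ_[p]))
          * (PowerSeries.X : PowerSeries ℚ_[p])^(p-1) := by
      ring
    rw [hre, coeff_mul_X_pow']
    split_ifs with hle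
    · have hcast : ∀ a ≤ N, ‖coeff (R := ℚ_[p]) a ((m.choose j : ℕ) : PowerSeries ℚ_[p])‖ ≤ 1 := by
        intro a _
        have : ((m.choose j : ℕ) : PowerSeries ℚ_[p])
            = PowerSeries.C (R := ℚ_[p]) ((m.choose j : ℕ) : ℚ_[p]) := by
          rw [map_natCast]
        rw [this, coeff_C]
        split_ifs
        · exact_mod_cast Padic.norm_int_le_one ((m.choose j : ℕ) : ℤ)
        · simp
      exact intU_mul p N _ _
        (intU_mul p N _ _ (intU_pow p N A' hA'int j) hWint) hcast _ (by omega)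
    · simp
end

section
/- Let p be a prime, F a field of characteristic p, k an integer with k ≥ p+3, λ a nonzero element of F, and u ∈ F[[X]] a power series with constant coefficient 1. Then there exists a unique power series z ∈ F[[X]] with constant coefficient 1 such that z − u·φ(z) + λ⁻²·X^{k−p−2}·φ(φ(z)) = 0. -/
open PowerSeries

/-- Substitution of the power series `g` (of positive order) into `f`: the coefficient
of `X^j` in `f(g)` is `Σ_{n ≤ j} f_n · [X^j](g^n)`. -/
noncomputable def substSeries {R : Type*} [CommRing R] (g f : PowerSeries R) :
    PowerSeries R :=
  PowerSeries.mk fun j =>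
    ∑ n ∈ Finset.range (j + 1),
      PowerSeries.coeff n f * PowerSeries.coeff j (g ^ n)

/-- `φ : F[[X]] → F[[X]]` is the substitution `X ↦ X^p` (the reduction mod `p` of
`X ↦ (1+X)^p - 1`). -/
noncomputable def phiP (p : ℕ) {F : Type*} [CommRing F] (f : PowerSeries F) :
    PowerSeries F :=
  substSeries (PowerSeries.X ^ p) f

section Aux

variable {F : Type*} [Field F]

lemma coeff_phiP {p : ℕ} (hp : 0 < p) (f : PowerSeries F) (j : ℕ) :
    coeff j (phiP p f) = if p ∣ j then coeff (j / p) f else 0 := by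
  unfold phiP substSeries
  rw [coeff_mk]
  by_cases h : p ∣ j
  · obtain ⟨t, rfl⟩ := h
    rw [if_pos ⟨t, rfl⟩, Nat.mul_div_cancel_left t hp]
    rw [Finset.sum_eq_single t]
    · rw [← pow_mul, coeff_X_pow, if_pos rfl, mul_one]
    · intro n hn hne
      rw [← pow_mul, coeff_X_pow, if_neg, mul_zero]
      intro hEq
      exact hne (Nat.eq_of_mul_eq_mul_left hp hEq).symm
    · intro ht
      exact absurd (Finset.mem_range.mpr (Nat.lt_succ_of_le (Nat.le_mul_of_pos_left t hp))) ht
  · rw [if_neg h]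
    apply Finset.sum_eq_zero
    intro n _
    rw [← pow_mul, coeff_X_pow, if_neg, mul_zero]
    rintro rfl
    exact h ⟨n, rfl⟩

lemma coeff_phiP_phiP {p : ℕ} (hp : 0 < p) (f : PowerSeries F) (j : ℕ) :
    coeff j (phiP p (phiP p f)) = if p ^ 2 ∣ j then coeff (j / p ^ 2) f else 0 := by
  rw [coeff_phiP hp]
  by_cases h : p ∣ j
  · rw [if_pos h, coeff_phiP hp]
    by_cases h2 : p ∣ j / p
    · have hpp : p * p ∣ j := (Nat.dvd_div_iff_mul_dvd h).mp h2
      rw [if_pos h2, if_pos (by rwa [sq]), Nat.div_div_eq_div_mul, ← sq]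
    · rw [if_neg h2, if_neg]
      intro hc
      exact h2 ((Nat.dvd_div_iff_mul_dvd h).mpr (by rwa [← sq]))
  · rw [if_neg h, if_neg]
    intro hc
    exact h (dvd_trans (dvd_pow_self p two_ne_zero) hc)

/-- Right-hand side of the coefficient recursion. -/
noncomputable def rhsFun (p m : ℕ) (c : F) (u z : PowerSeries F) (j : ℕ) : F :=
  (∑ i ∈ Finset.range (j + 1),
      (if p ∣ i then coeff (i / p) z else 0) * coeff (j - i) u)
    - c * (if m ≤ j ∧ p ^ 2 ∣ (j - m) then coeff ((j - m) / p ^ 2) z else 0)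

lemma coeff_eqn {p m : ℕ} (hp : 0 < p) (hm : 1 ≤ m) (c : F) (u z : PowerSeries F) :
    z - u * phiP p z + C c * X ^ m * phiP p (phiP p z) = 0 ↔
      ∀ j, coeff j z = rhsFun p m c u z j := by
  rw [PowerSeries.ext_iff]
  apply forall_congr'
  intro j
  rw [map_add, map_sub, map_zero]
  have h1 : coeff j (u * phiP p z) =
      ∑ i ∈ Finset.range (j + 1), (if p ∣ i then coeff (i / p) z else 0) * coeff (j - i) u := by
    rw [mul_comm, coeff_mul, Finset.Nat.sum_antidiagonal_eq_sum_range_succ_mk]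
    refine Finset.sum_congr rfl fun i _ => ?_
    rw [coeff_phiP hp]
  have h2 : coeff j (C c * X ^ m * phiP p (phiP p z)) =
      c * (if m ≤ j ∧ p ^ 2 ∣ (j - m) then coeff ((j - m) / p ^ 2) z else 0) := by
    rw [mul_assoc, coeff_C_mul, coeff_X_pow_mul', coeff_phiP_phiP hp]
    by_cases hmj : m ≤ j
    · rw [if_pos hmj]
      by_cases hd : p ^ 2 ∣ (j - m)
      · rw [if_pos hd, if_pos ⟨hmj, hd⟩]
      · rw [if_neg hd, if_neg (by tauto), mul_zero]
    · rw [if_neg hmj, if_neg (by tauto), mul_zero]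
  rw [h1, h2]
  unfold rhsFun
  constructor <;> intro h <;> linear_combination h

/-- The coefficients of the solution, defined by strong recursion. -/
noncomputable def coeffSeq (p m : ℕ) (hp : 2 ≤ p) (c : F) (u : PowerSeries F) : ℕ → F
  | 0 => 1
  | j + 1 =>
      (∑ i ∈ (Finset.range (j + 2)).attach,
        (if p ∣ (i : ℕ) then coeffSeq p m hp c u ((i : ℕ) / p) else 0) *
          coeff (j + 1 - (i : ℕ)) u)
      - c * (if m ≤ j + 1 ∧ p ^ 2 ∣ (j + 1 - m)
          then coeffSeq p m hp c u ((j + 1 - m) / p ^ 2) else 0)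
  decreasing_by
  · have hi : (i : ℕ) < j + 2 := Finset.mem_range.mp i.2
    have h0 : 0 < p := by omega
    rw [Nat.div_lt_iff_lt_mul h0]
    nlinarith
  · have h0 : 0 < p ^ 2 := by positivity
    rw [Nat.div_lt_iff_lt_mul h0]
    have : 4 ≤ p ^ 2 := by nlinarith
    have : j + 1 - m ≤ j + 1 := Nat.sub_le _ _
    nlinarith

lemma coeffSeq_zero {p m : ℕ} (hp : 2 ≤ p) (c : F) (u : PowerSeries F) :
    coeffSeq p m hp c u 0 = 1 := by
  rw [coeffSeq]

lemma coeffSeq_spec {p m : ℕ} (hp : 2 ≤ p) (hm : 1 ≤ m) (c : F) (u : PowerSeries F)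
    (hu : constantCoeff u = 1) (j : ℕ) :
    coeffSeq p m hp c u j = rhsFun p m c u (mk (coeffSeq p m hp c u)) j := by
  cases j with
  | zero =>
    unfold rhsFun
    rw [coeffSeq]
    rw [Finset.range_one, Finset.sum_singleton, if_pos (dvd_zero p),
      if_neg (by omega : ¬ (m ≤ 0 ∧ p ^ 2 ∣ 0 - m)), mul_zero, sub_zero, coeff_mk,
      Nat.zero_div, coeffSeq_zero, Nat.zero_sub, one_mul,
      coeff_zero_eq_constantCoeff_apply, hu]
  | succ j =>
    rw [coeffSeq]
    unfold rhsFun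
    congr 1
    · rw [← Finset.sum_attach (Finset.range (j + 2))]
      refine Finset.sum_congr rfl fun i _ => ?_
      rw [coeff_mk]
    · rw [coeff_mk]

end Aux

/-- For `k ≥ p + 3`, `λ ≠ 0` and `u ∈ 1 + X·F[[X]]`, there is a unique
`z ∈ 1 + X·F[[X]]` such that `z - u·φ(z) + λ⁻²·X^(k-p-2)·φ²(z) = 0`. -/
theorem exists_unique_fixed_point (p : ℕ) (hp : p.Prime) (F : Type*) [Field F]
    [CharP F p] (k : ℕ) (hk : p + 3 ≤ k) (lam : F) (hlam : lam ≠ 0)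
    (u : PowerSeries F) (hu : PowerSeries.constantCoeff u = 1) :
    ∃! z : PowerSeries F, PowerSeries.constantCoeff z = 1 ∧
      z - u * phiP p z +
        PowerSeries.C (lam ^ 2)⁻¹ * PowerSeries.X ^ (k - p - 2) * phiP p (phiP p z) = 0 := by
  set m := k - p - 2 with hmdef
  set c := (lam ^ 2)⁻¹ with hcdef
  have hp2 : 2 ≤ p := hp.two_le
  have hp0 : 0 < p := by omega
  have hm : 1 ≤ m := by omega
  refine ⟨mk (coeffSeq p m hp2 c u), ⟨?_, ?_⟩, ?_⟩
  · rw [← coeff_zero_eq_constantCoeff_apply, coeff_mk, coeffSeq_zero]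
  · rw [coeff_eqn hp0 hm]
    intro j
    rw [coeff_mk]
    exact coeffSeq_spec hp2 hm c u hu j
  · rintro w ⟨hw0, hweq⟩
    rw [coeff_eqn hp0 hm] at hweq
    ext j
    induction j using Nat.strong_induction_on with
    | _ j ih =>
      cases j with
      | zero =>
        rw [coeff_mk, coeffSeq_zero, coeff_zero_eq_constantCoeff_apply, hw0]
      | succ j =>
        rw [hweq, coeff_mk, coeffSeq_spec hp2 hm c u hu]
        unfold rhsFun
        congr 1
        · refine Finset.sum_congr rfl fun i hi => ?_
          have hi2 : i < j + 2 := Finset.mem_range.mp hi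
          by_cases hd : p ∣ i
          · rw [if_pos hd, if_pos hd]
            congr 1
            apply ih
            rw [Nat.div_lt_iff_lt_mul hp0]
            nlinarith
          · rw [if_neg hd, if_neg hd]
        · by_cases hd : m ≤ j + 1 ∧ p ^ 2 ∣ (j + 1 - m)
          · rw [if_pos hd, if_pos hd]
            congr 1
            apply ih
            have h1 : j + 1 - m ≤ j := by omega
            exact Nat.lt_succ_of_le (le_trans (Nat.div_le_self _ _) h1)
          · rw [if_neg hd, if_neg hd]
end

section
/- Let p be a prime, k ≥ 2 an integer, a_p ∈ ℤ_p with v_p(a_p) ≥ 1, and α ∈ ℤ_p[[X]] a power series with constant coefficient a_p. Set q = ((1+X)^p − 1)/X ∈ ℤ_p[X] and let P ∈ M₂(ℤ_p[[X]]) be the matrix with rows (0, −1) and (q^{k−1}, α). If H ∈ M₂(ℤ_p[[X]]) satisfies H ≡ Id modulo X^{k−1} and H·P = P·φ(H), then H = Id. (This is the uniqueness part of the paper's construction of the Wach module: two matrices G, G' with P·φ(G) = G·γ(P), P·φ(G') = G'·γ(P) and G ≡ G' mod X^{k−1} must coincide, since H = G'G⁻¹ then satisfies the above.) -/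
open PowerSeries

/-- `φ : R[[X]] → R[[X]]` is the substitution `X ↦ (1+X)^p - 1`. -/
noncomputable def phiCycl (p : ℕ) {R : Type*} [CommRing R] (f : PowerSeries R) :
    PowerSeries R :=
  substSeries ((1 + PowerSeries.X) ^ p - 1) f

/-- `q = ((1+X)^p - 1)/X = Σ_{j=0}^{p-1} (1+X)^j ∈ ℤ_p[[X]]`. -/
noncomputable def qZ (p : ℕ) [Fact p.Prime] : PowerSeries ℤ_[p] :=
  ∑ j ∈ Finset.range p, (1 + PowerSeries.X) ^ j

section helpers
variable {R : Type*} [CommRing R]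

lemma coeff_substSeries (g f : PowerSeries R) (j : ℕ) :
    coeff j (substSeries g f) =
      ∑ n ∈ Finset.range (j + 1), coeff n f * coeff j (g ^ n) := by
  simp [substSeries]

lemma substSeries_add (g f1 f2 : PowerSeries R) :
    substSeries g (f1 + f2) = substSeries g f1 + substSeries g f2 := by
  ext j
  simp [coeff_substSeries, add_mul, Finset.sum_add_distrib]

lemma substSeries_one (g : PowerSeries R) : substSeries g 1 = 1 := by
  ext j
  rw [coeff_substSeries, Finset.sum_eq_single 0]
  · simp
  · intro n hn hn0
    simp [coeff_one, hn0]
  · simp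

lemma phiCycl_add (p : ℕ) (f1 f2 : PowerSeries R) :
    phiCycl p (f1 + f2) = phiCycl p f1 + phiCycl p f2 := substSeries_add _ _ _

lemma phiCycl_one (p : ℕ) : phiCycl p (1 : PowerSeries R) = 1 := substSeries_one _

lemma phiCycl_zero (p : ℕ) : phiCycl p (0 : PowerSeries R) = 0 := by
  ext j; simp [phiCycl, coeff_substSeries]

lemma constantCoeff_gp (p : ℕ) :
    constantCoeff (R := R) ((1 + X) ^ p - 1) = 0 := by
  simp

lemma coeff_one_add_X_pow (n : ℕ) :
    coeff 1 ((1 + X) ^ n) = (n : R) := by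
  induction n with
  | zero => simp
  | succ n ih =>
    rw [pow_succ, mul_add, mul_one, map_add, ih,
      show (1:ℕ) = 0 + 1 from rfl, PowerSeries.coeff_succ_mul_X]
    simp

lemma coeff_gp_one (p : ℕ) : coeff 1 ((1 + X) ^ p - 1) = (p : R) := by
  simp [coeff_one_add_X_pow]

lemma coeff_pow_lt (g : PowerSeries R) (hg : constantCoeff g = 0)
    {M n : ℕ} (h : n < M) : coeff n (g ^ M) = 0 :=
  (X_pow_dvd_iff.mp (pow_dvd_pow_of_dvd (X_dvd_iff.mpr hg) M)) n h

lemma coeff_pow_self (g : PowerSeries R) (hg : constantCoeff g = 0) (M : ℕ) :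
    coeff M (g ^ M) = (coeff 1 g) ^ M := by
  induction M with
  | zero => simp
  | succ n ih =>
    rw [pow_succ, coeff_mul, Finset.sum_eq_single (n, 1)]
    · rw [ih, pow_succ]
    · rintro ⟨x, y⟩ hb hne
      rw [Finset.HasAntidiagonal.mem_antidiagonal] at hb
      rcases Nat.lt_or_ge x n with hx | hx
      · rw [coeff_pow_lt g hg hx, zero_mul]
      · simp only [ne_eq, Prod.mk.injEq, not_and] at hne
        have hy : y = 0 := by
          rcases Nat.eq_or_lt_of_le hx with h1 | h1
          · have hy1 : y ≠ 1 := hne h1.symm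
            omega
          · omega
        subst hy
        simp [PowerSeries.coeff_zero_eq_constantCoeff, hg]
    · simp [Finset.mem_antidiagonal]

lemma coeff_phi_lt (p : ℕ) (f : PowerSeries R) {m : ℕ}
    (h : ∀ n < m, coeff n f = 0) {x : ℕ} (hx : x < m) :
    coeff x (phiCycl p f) = 0 := by
  rw [phiCycl, coeff_substSeries]
  refine Finset.sum_eq_zero fun n hn => ?_
  rw [Finset.mem_range, Nat.lt_succ_iff] at hn
  rw [h n (lt_of_le_of_lt hn hx), zero_mul]

lemma coeff_phi_self (p : ℕ) (f : PowerSeries R) {m : ℕ}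
    (h : ∀ n < m, coeff n f = 0) :
    coeff m (phiCycl p f) = (p : R) ^ m * coeff m f := by
  rw [phiCycl, coeff_substSeries, Finset.sum_eq_single m]
  · rw [coeff_pow_self _ (constantCoeff_gp p), coeff_gp_one]; ring
  · intro n hn hne
    rw [Finset.mem_range, Nat.lt_succ_iff] at hn
    rw [h n (lt_of_le_of_ne hn hne), zero_mul]
  · simp

lemma coeff_mul_const (f g : PowerSeries R) {m : ℕ}
    (h : ∀ x < m, coeff x f = 0) :
    coeff m (f * g) = coeff m f * constantCoeff g := by
  rw [coeff_mul, Finset.sum_eq_single (m, 0)]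
  · simp [PowerSeries.coeff_zero_eq_constantCoeff]
  · rintro ⟨x, y⟩ hb hne
    rw [Finset.HasAntidiagonal.mem_antidiagonal] at hb
    simp only [ne_eq, Prod.mk.injEq, not_and] at hne
    have hx : x < m := by
      rcases Nat.lt_or_ge x m with h1 | h1
      · exact h1
      · have hxm : x = m := by omega
        have := hne hxm
        omega
    rw [h x hx, zero_mul]
  · simp [Finset.mem_antidiagonal]

lemma const_mul_coeff (f g : PowerSeries R) {m : ℕ}
    (h : ∀ x < m, coeff x f = 0) :
    coeff m (g * f) = constantCoeff g * coeff m f := by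
  rw [mul_comm, coeff_mul_const f g h, mul_comm]

end helpers

/-- Uniqueness in the construction of the Wach module: if `v_p(a_p) ≥ 1`,
`P = [[0,-1],[q^(k-1),α]]` with `α(0) = a_p`, and `H ≡ Id mod X^(k-1)` satisfies
`H·P = P·φ(H)`, then `H = Id`. -/
theorem wach_uniqueness (p : ℕ) [Fact p.Prime] (k : ℕ) (hk : 2 ≤ k)
    (a : ℤ_[p]) (ha : (p : ℤ_[p]) ∣ a)
    (α : PowerSeries ℤ_[p]) (hα : PowerSeries.constantCoeff α = a)
    (H : Matrix (Fin 2) (Fin 2) (PowerSeries ℤ_[p]))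
    (hH : ∀ i j, (PowerSeries.X : PowerSeries ℤ_[p]) ^ (k - 1) ∣ (H - 1) i j)
    (hHP : H * !![0, -1; (qZ p) ^ (k - 1), α] =
      !![0, -1; (qZ p) ^ (k - 1), α] * H.map (phiCycl p)) :
    H = 1 := by
  classical
  by_contra hne
  set P : Matrix (Fin 2) (Fin 2) (PowerSeries ℤ_[p]) := !![0, -1; (qZ p) ^ (k - 1), α]
    with hPdef
  set N : Matrix (Fin 2) (Fin 2) (PowerSeries ℤ_[p]) := H - 1 with hNdef
  have hN0 : N ≠ 0 := sub_ne_zero.mpr hne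
  -- existence of a nonzero coefficient
  have hex : ∃ m, ∃ i j, coeff m (N i j) ≠ 0 := by
    by_contra h
    push_neg at h
    apply hN0
    ext i j n
    simpa using h n i j
  set m := Nat.find hex with hmdef
  obtain ⟨i0, j0, hij0⟩ := Nat.find_spec hex
  have hlow : ∀ n < m, ∀ i j, coeff n (N i j) = 0 := by
    intro n hn i j
    by_contra hc
    exact Nat.find_min hex hn ⟨i, j, hc⟩
  have hmk : k - 1 ≤ m := by
    by_contra hc
    push_neg at hc
    exact hij0 (PowerSeries.X_pow_dvd_iff.mp (hH i0 j0) m hc)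
  have hm1 : 1 ≤ m := le_trans (by omega) hmk
  -- the matrix functional equation for N
  have hmapH : H.map (phiCycl p) = 1 + N.map (phiCycl p) := by
    ext i j
    simp only [Matrix.map_apply, Matrix.add_apply]
    have : H i j = (1 : Matrix (Fin 2) (Fin 2) (PowerSeries ℤ_[p])) i j + N i j := by
      simp [hNdef]
    rw [this, phiCycl_add]
    congr 1
    rcases eq_or_ne i j with h | h
    · simp [Matrix.one_apply, h, phiCycl_one]
    · simp [Matrix.one_apply, h, phiCycl_zero]
  have E : N * P = P * N.map (phiCycl p) := by
    have h1 : N * P = H * P - P := by rw [hNdef, sub_mul, one_mul]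
    rw [h1, hHP, hmapH, mul_add, mul_one, add_sub_cancel_left]
  -- set up constants
  set t : ℤ_[p] := (p : ℤ_[p]) ^ m with htdef
  set d : ℤ_[p] := (p : ℤ_[p]) ^ (k - 1) with hddef
  set C : Matrix (Fin 2) (Fin 2) ℤ_[p] := fun i j => coeff m (N i j) with hCdef
  have hq : constantCoeff (qZ p) = (p : ℤ_[p]) := by
    simp [qZ]
  have main : ∀ i j : Fin 2,
      (∑ l, C i l * constantCoeff (P l j)) =
        ∑ l, constantCoeff (P i l) * (t * C l j) := by
    intro i j
    have h1 := congrArg (coeff m) (congrFun (congrFun E i) j)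
    rw [Matrix.mul_apply, Matrix.mul_apply, map_sum, map_sum] at h1
    have hL : ∀ l, coeff m (N i l * P l j) = C i l * constantCoeff (P l j) :=
      fun l => coeff_mul_const _ _ (fun x hx => hlow x hx i l)
    have hR : ∀ l, coeff m (P i l * (N.map (phiCycl p)) l j)
        = constantCoeff (P i l) * (t * C l j) := by
      intro l
      rw [Matrix.map_apply,
        const_mul_coeff _ _ (fun x hx => coeff_phi_lt p _ (fun n hn => hlow n hn l j) hx),
        coeff_phi_self p _ (fun n hn => hlow n hn l j)]
    simp only [hL, hR] at h1
    exact h1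
  -- constant coefficients of P
  have hP00 : constantCoeff (P 0 0) = 0 := by simp [hPdef]
  have hP01 : constantCoeff (P 0 1) = -1 := by simp [hPdef]
  have hP10 : constantCoeff (P 1 0) = d := by
    rw [hPdef]
    show constantCoeff ((qZ p) ^ (k - 1)) = d
    rw [map_pow, hq, hddef]
  have hP11 : constantCoeff (P 1 1) = a := by
    rw [hPdef]
    show constantCoeff α = a
    exact hα
  have e1 := main 0 0
  have e2 := main 0 1
  have e3 := main 1 0
  have e4 := main 1 1
  simp only [Fin.sum_univ_two, hP00, hP01, hP10, hP11] at e1 e2 e3 e4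
  -- nonvanishing facts
  have hpa : Prime (p : ℤ_[p]) := PadicInt.prime_p
  have hp0 : (p : ℤ_[p]) ≠ 0 := hpa.ne_zero
  have hd0 : d ≠ 0 := pow_ne_zero _ hp0
  have htp : (p : ℤ_[p]) ∣ t := dvd_pow_self _ (by omega)
  have h1mt : (1 : ℤ_[p]) - t ≠ 0 := by
    intro h
    have : t = 1 := by linear_combination -h
    exact hpa.not_unit (isUnit_of_dvd_one (this ▸ htp))
  have h1pt : (1 : ℤ_[p]) + t ≠ 0 := by
    intro h
    have h2 : (p : ℤ_[p]) ∣ 1 := by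
      have : (1 : ℤ_[p]) = -t := by linear_combination h
      rw [this]
      exact Dvd.dvd.neg_right htp
    exact hpa.not_unit (isUnit_of_dvd_one h2)
  have he : d * (1 + t) * (1 + t) - a ^ 2 * t ≠ 0 := by
    intro h
    obtain ⟨b, hb⟩ := ha
    have hts : t = d * (p : ℤ_[p]) ^ (m - (k - 1)) := by
      rw [htdef, hddef, ← pow_add]
      congr 1
      omega
    have h2 : d * ((1 + t) * (1 + t) -
        (p : ℤ_[p]) * ((p : ℤ_[p]) * b ^ 2 * (p : ℤ_[p]) ^ (m - (k - 1)))) = 0 := by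
      rw [← h, hb, hts]; ring
    have h3 : (1 + t) * (1 + t) =
        (p : ℤ_[p]) * ((p : ℤ_[p]) * b ^ 2 * (p : ℤ_[p]) ^ (m - (k - 1))) := by
      rcases mul_eq_zero.mp h2 with h' | h'
      · exact absurd h' hd0
      · exact sub_eq_zero.mp h'
    have h4 : (p : ℤ_[p]) ∣ (1 + t) * (1 + t) := ⟨_, h3⟩
    have h5 : (p : ℤ_[p]) ∣ (1 + t) := by
      rcases hpa.dvd_mul.mp h4 with h' | h' <;> exact h'
    have h6 : (p : ℤ_[p]) ∣ 1 := by
      have := dvd_sub h5 htp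
      simpa using this
    exact hpa.not_unit (isUnit_of_dvd_one h6)
  -- linear algebra over ℤ_[p]
  have eqA : (1 - t) * (d * (1 + t) * C 0 1 + t * a * C 1 1) = 0 := by
    linear_combination e1 + t * e4
  have eqA' : d * (1 + t) * C 0 1 + t * a * C 1 1 = 0 := by
    rcases mul_eq_zero.mp eqA with h | h
    · exact absurd h h1mt
    · exact h
  have eqB : (1 - t) * (d * (1 + t) * C 1 1 - t * a ^ 2 * C 1 1 - t * d * a * C 0 1) = 0 := by
    linear_combination e3 - t * d * e2 - t * a * e4
  have eqB' : d * (1 + t) * C 1 1 - t * a ^ 2 * C 1 1 - t * d * a * C 0 1 = 0 := by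
    rcases mul_eq_zero.mp eqB with h | h
    · exact absurd h h1mt
    · exact h
  have hC11 : C 1 1 = 0 := by
    have h0 : d * ((d * (1 + t) * (1 + t) - a ^ 2 * t) * C 1 1) = 0 := by
      linear_combination (d * (1 + t)) * eqB' + (t * d * a) * eqA'
    rcases mul_eq_zero.mp h0 with h' | h'
    · exact absurd h' hd0
    · rcases mul_eq_zero.mp h' with h'' | h''
      · exact absurd h'' he
      · exact h''
  have hC01 : C 0 1 = 0 := by
    have h0 : d * (1 + t) * C 0 1 = 0 := by linear_combination eqA' - t * a * hC11
    rcases mul_eq_zero.mp h0 with h' | h'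
    · rcases mul_eq_zero.mp h' with h'' | h''
      · exact absurd h'' hd0
      · exact absurd h'' h1pt
    · exact h'
  have hC00 : C 0 0 = 0 := by
    linear_combination (-1 : ℤ_[p]) * e2 + a * hC01 + t * hC11
  have hC10 : C 1 0 = 0 := by
    linear_combination (-1 : ℤ_[p]) * e4 + a * hC11 - t * d * hC01 - t * a * hC11
  apply hij0
  have : ∀ i j : Fin 2, C i j = 0 := by
    intro i j
    fin_cases i <;> fin_cases j <;> assumption
  exact this i0 j0
end

section
/- Let F be an algebraically closed field, A ∈ M₂(F) an invertible matrix, B ∈ M₂(F) a nonzero matrix, and c ∈ F a scalar such that B·A = c·A·B. Then there exist roots α and β of the characteristic polynomial of A (eigenvalues of A) with α = c·β; in other words, c is a ratio of two eigenvalues of A. -/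
open Polynomial in
private lemma key_identity (F : Type*) [Field F]
    (A B : Matrix (Fin 2) (Fin 2) F) (t d c : F)
    (hCH : A * A = t • A - d • 1) (h : B * A = c • (A * B))
    (hB : B ≠ 0) (hd : d ≠ 0) (hc1 : c ≠ 1) :
    c * t ^ 2 = d * (1 + c) ^ 2 := by
  have e1 : B * (A * A) = (c * c) • (A * A * B) := by
    calc B * (A * A) = (B * A) * A := by rw [mul_assoc]
    _ = (c • (A * B)) * A := by rw [h]
    _ = c • (A * (B * A)) := by rw [smul_mul_assoc, mul_assoc]
    _ = c • (A * (c • (A * B))) := by rw [h]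
    _ = (c * c) • (A * A * B) := by rw [mul_smul_comm, smul_smul, mul_assoc]
  have e3 : (t * c - c * c * t) • (A * B) = (d - c * c * d) • B := by
    rw [hCH] at e1
    simp only [mul_sub, sub_mul, mul_smul_comm, smul_mul_assoc, mul_one, one_mul, h,
      smul_smul, smul_sub] at e1
    linear_combination (norm := module) e1
  have e5 := congrArg (fun M => A * M) e3
  simp only [mul_smul_comm, ← mul_assoc] at e5
  rw [hCH] at e5
  simp only [sub_mul, smul_mul_assoc, one_mul, smul_sub, smul_smul] at e5
  have e6 : ((t * c - c * c * t) * t - (d - c * c * d)) • (A * B)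
      = ((t * c - c * c * t) * d) • B := by
    linear_combination (norm := module) e5
  have hz : ((1 - c) ^ 2 * d * (c * t ^ 2 - d * (1 + c) ^ 2)) • B = 0 := by
    linear_combination (norm := module)
      ((t * c - c * c * t) • e6 - ((t * c - c * c * t) * t - (d - c * c * d)) • e3)
  rcases smul_eq_zero.mp hz with hs | hs
  · have h1c : (1 : F) - c ≠ 0 := sub_ne_zero.mpr (Ne.symm hc1)
    rcases mul_eq_zero.mp hs with h' | h'
    · rcases mul_eq_zero.mp h' with h'' | h''
      · exact absurd h'' (pow_ne_zero 2 h1c)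
      · exact absurd h'' hd
    · exact sub_eq_zero.mp h'
  · exact absurd hs hB

open Polynomial in
private lemma charpoly_fin_two' (F : Type*) [Field F] (A : Matrix (Fin 2) (Fin 2) F) :
    Matrix.charpoly A = X ^ 2 - C A.trace * X + C A.det := by
  rw [Matrix.charpoly, Matrix.det_fin_two, Matrix.trace_fin_two, Matrix.det_fin_two]
  rw [Matrix.charmatrix_apply_eq, Matrix.charmatrix_apply_eq,
    Matrix.charmatrix_apply_ne _ _ _ (by decide), Matrix.charmatrix_apply_ne _ _ _ (by decide)]
  simp only [map_add, map_mul, map_sub]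
  ring

open Polynomial in
/-- If `A ∈ M₂(F)` is invertible, `B ∈ M₂(F)` is nonzero and `B·A = c·A·B`, then `c`
is a ratio of two eigenvalues of `A`: there are roots `α, β` of the characteristic
polynomial of `A` with `α = c·β`. -/
theorem scalar_is_ratio_of_eigenvalues (F : Type*) [Field F] [IsAlgClosed F]
    (A B : Matrix (Fin 2) (Fin 2) F) (hA : IsUnit A) (hB : B ≠ 0) (c : F)
    (h : B * A = c • (A * B)) :
    ∃ α β : F, (Matrix.charpoly A).IsRoot α ∧ (Matrix.charpoly A).IsRoot β ∧
      α = c * β := by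
  have hd : A.det ≠ 0 := ((Matrix.isUnit_iff_isUnit_det A).mp hA).ne_zero
  have hcp : A.charpoly = X ^ 2 - C A.trace * X + C A.det := charpoly_fin_two' F A
  have root_of : ∀ x : F, x ^ 2 - A.trace * x + A.det = 0 → (Matrix.charpoly A).IsRoot x := by
    intro x hx
    rw [hcp]
    simp only [Polynomial.IsRoot, Polynomial.eval_add, Polynomial.eval_sub,
      Polynomial.eval_pow, Polynomial.eval_mul, Polynomial.eval_C, Polynomial.eval_X]
    linear_combination hx
  obtain ⟨β, hβ⟩ : ∃ β, (Matrix.charpoly A).IsRoot β := by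
    apply IsAlgClosed.exists_root
    apply Polynomial.degree_ne_of_natDegree_ne
    rw [Matrix.charpoly_natDegree_eq_dim]
    simp
  by_cases hc1 : c = 1
  · exact ⟨β, β, hβ, hβ, by rw [hc1, one_mul]⟩
  · have hCH : A * A = A.trace • A - A.det • 1 := by
      ext i j
      fin_cases i <;> fin_cases j <;>
        simp [Matrix.mul_apply, Fin.sum_univ_two, Matrix.trace, Matrix.diag,
          Matrix.det_fin_two, Matrix.one_apply] <;> ring
    have key := key_identity F A B A.trace A.det c hCH h hB hd hc1
    have hβ' : β ^ 2 - A.trace * β + A.det = 0 := by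
      rw [hcp] at hβ
      simpa only [Polynomial.IsRoot, Polynomial.eval_add, Polynomial.eval_sub,
        Polynomial.eval_pow, Polynomial.eval_mul, Polynomial.eval_C, Polynomial.eval_X] using hβ
    by_cases hc2 : c = -1
    · subst hc2
      have ht : A.trace = 0 := by
        have ht2 : A.trace ^ 2 = 0 := by linear_combination -key
        exact pow_eq_zero_iff (n := 2) (by norm_num) |>.mp ht2
      refine ⟨-1 * β, β, root_of _ ?_, hβ, rfl⟩
      rw [ht] at hβ' ⊢
      linear_combination hβ'
    · have h1c : (1 + c) ≠ 0 := fun H => hc2 (by linear_combination H)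
      refine ⟨c * (A.trace / (1 + c)), A.trace / (1 + c), root_of _ ?_, root_of _ ?_, rfl⟩
      · field_simp
        linear_combination -key
      · field_simp
        linear_combination -key
end

section
/- For every prime p and every integer n ≥ 1, the power series q_n/p ∈ ℚ_p[[X]] has constant coefficient 1 (hence is invertible in ℚ_p[[X]]), and for every integer i with 0 ≤ i < p^{n−1}(p−1), the coefficients of X^i in q_n/p and in its inverse (q_n/p)⁻¹ both lie in ℤ_p. In particular, for n ≥ 2 and p+2 ≤ k ≤ 2p−1, the parts of degree ≤ k−2 of (q_n/p)^{±1} have coefficients in ℤ_p. -/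
open PowerSeries

/-- Integer version of `qSeries`. -/
noncomputable def qInt (p : ℕ) (n : ℕ) : PowerSeries ℤ :=
  ∑ j ∈ Finset.range p, ((1 + PowerSeries.X) ^ (p ^ (n - 1))) ^ j

lemma qSeries_eq_map (p : ℕ) [Fact p.Prime] (n : ℕ) :
    qSeries p n = PowerSeries.map (Int.castRingHom ℚ_[p]) (qInt p n) := by
  simp [qSeries, qInt, map_sum, map_pow, map_add, map_one]

lemma qInt_map_zmod (p : ℕ) [Fact p.Prime] (n : ℕ) :
    PowerSeries.map (Int.castRingHom (ZMod p)) (qInt p n)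
      = PowerSeries.X ^ (p ^ (n - 1) * (p - 1)) := by
  haveI : CharP (PowerSeries (ZMod p)) p :=
    charP_of_injective_ringHom (PowerSeries.C_injective (R := ZMod p)) p
  have hp := (Fact.out : p.Prime)
  have hX : (PowerSeries.X : PowerSeries (ZMod p)) ^ (p ^ (n - 1)) ≠ 0 :=
    pow_ne_zero _ PowerSeries.X_ne_zero
  apply mul_right_cancel₀ hX
  have hmap : PowerSeries.map (Int.castRingHom (ZMod p)) (qInt p n)
      = ∑ j ∈ Finset.range p, ((1 + PowerSeries.X) ^ (p ^ (n - 1))) ^ j := by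
    simp [qInt, map_sum, map_pow, map_add, map_one]
  rw [hmap]
  have h1 : ((1 : PowerSeries (ZMod p)) + PowerSeries.X) ^ (p ^ (n - 1))
      = 1 + PowerSeries.X ^ (p ^ (n - 1)) := by
    rw [add_pow_char_pow]; simp
  have hgeo := geom_sum_mul ((1 : PowerSeries (ZMod p)) + PowerSeries.X ^ (p ^ (n - 1))) p
  rw [h1]
  have : (1 : PowerSeries (ZMod p)) + PowerSeries.X ^ (p ^ (n - 1)) - 1
      = PowerSeries.X ^ (p ^ (n - 1)) := by ring
  rw [this] at hgeo
  rw [hgeo]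
  have h2 : ((1 : PowerSeries (ZMod p)) + PowerSeries.X ^ (p ^ (n - 1))) ^ p
      = 1 + (PowerSeries.X ^ (p ^ (n - 1))) ^ p := by
    rw [add_pow_char]; simp
  rw [h2, ← pow_mul, ← pow_add, add_sub_cancel_left]
  congr 1
  rw [← Nat.mul_succ, Nat.succ_eq_add_one, Nat.sub_add_cancel hp.one_le]

/-- `q_n/p` has constant coefficient `1`, and for `0 ≤ i < p^(n-1)(p-1)` the
coefficients of `X^i` in `q_n/p` and `(q_n/p)⁻¹` lie in `ℤ_p`. In particular, for
`n ≥ 2` and `p + 2 ≤ k ≤ 2p - 1`, the parts of degree `≤ k - 2` of `(q_n/p)^{±1}`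
have coefficients in `ℤ_p`. -/
theorem q_over_p_coeffs_integral (p : ℕ) [Fact p.Prime] (n : ℕ) (hn : 1 ≤ n) :
    PowerSeries.constantCoeff ((p : ℚ_[p])⁻¹ • qSeries p n) = 1 ∧
    (∀ i < p ^ (n - 1) * (p - 1),
      ‖PowerSeries.coeff i ((p : ℚ_[p])⁻¹ • qSeries p n)‖ ≤ 1 ∧
      ‖PowerSeries.coeff i (((p : ℚ_[p])⁻¹ • qSeries p n)⁻¹)‖ ≤ 1) ∧
    (2 ≤ n → ∀ k, p + 2 ≤ k → k ≤ 2 * p - 1 → ∀ i ≤ k - 2,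
      ‖PowerSeries.coeff i ((p : ℚ_[p])⁻¹ • qSeries p n)‖ ≤ 1 ∧
      ‖PowerSeries.coeff i (((p : ℚ_[p])⁻¹ • qSeries p n)⁻¹)‖ ≤ 1) := by
  have hp := (Fact.out : p.Prime)
  have hp0 : (p : ℚ_[p]) ≠ 0 := Nat.cast_ne_zero.mpr hp.pos.ne'
  set φ : PowerSeries ℚ_[p] := (p : ℚ_[p])⁻¹ • qSeries p n with hφ
  set N := p ^ (n - 1) * (p - 1) with hN
  -- coefficients of qSeries are integer casts
  have hcoeff : ∀ i, PowerSeries.coeff i (qSeries p n)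
      = ((PowerSeries.coeff i (qInt p n) : ℤ) : ℚ_[p]) := by
    intro i
    rw [qSeries_eq_map, PowerSeries.coeff_map]
    rfl
  -- divisibility below degree N
  have hdvd : ∀ i < N, (p : ℤ) ∣ PowerSeries.coeff i (qInt p n) := by
    intro i hi
    have := congrArg (PowerSeries.coeff i) (qInt_map_zmod p n)
    rw [PowerSeries.coeff_map, PowerSeries.coeff_X_pow] at this
    rw [if_neg hi.ne] at this
    exact (ZMod.intCast_zmod_eq_zero_iff_dvd _ p).mp this
  -- norm of coefficients of φ below N
  have hnormφ : ∀ i < N, ‖PowerSeries.coeff i φ‖ ≤ 1 := by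
    intro i hi
    obtain ⟨d, hd⟩ := hdvd i hi
    rw [hφ, PowerSeries.coeff_smul, hcoeff, hd, smul_eq_mul]
    push_cast
    rw [← mul_assoc, inv_mul_cancel₀ hp0, one_mul]
    exact Padic.norm_int_le_one d
  -- constant coefficient of φ is 1
  have hc0 : PowerSeries.constantCoeff φ = 1 := by
    have hq0 : PowerSeries.constantCoeff (qSeries p n) = p := by
      simp [qSeries, map_sum, map_pow]
    rw [hφ]
    rw [← PowerSeries.coeff_zero_eq_constantCoeff, PowerSeries.coeff_smul,
      PowerSeries.coeff_zero_eq_constantCoeff, hq0, smul_eq_mul,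
      inv_mul_cancel₀ hp0]
  -- norm of coefficients of φ⁻¹ below N, by strong induction
  have hnorminv : ∀ i < N, ‖PowerSeries.coeff i φ⁻¹‖ ≤ 1 := by
    intro i
    induction i using Nat.strong_induction_on with
    | _ i ih =>
      intro hi
      rw [PowerSeries.coeff_inv, hc0]
      by_cases h0 : i = 0
      · simp [h0]
      · rw [if_neg h0]
        rw [norm_mul]
        have : ‖-(1 : ℚ_[p])⁻¹‖ = 1 := by simp
        rw [this, one_mul]
        refine IsUltrametricDist.norm_sum_le_of_forall_le_of_nonneg zero_le_one ?_
        intro x hx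
        have hxsum := Finset.HasAntidiagonal.mem_antidiagonal.mp hx
        by_cases hlt : x.2 < i
        · rw [if_pos hlt, norm_mul]
          have h1 : ‖PowerSeries.coeff x.1 φ‖ ≤ 1 :=
            hnormφ x.1 (lt_of_le_of_lt (by omega) hi)
          have h2 : ‖PowerSeries.coeff x.2 φ⁻¹‖ ≤ 1 :=
            ih x.2 hlt (lt_trans hlt hi)
          exact mul_le_one₀ h1 (norm_nonneg _) h2
        · rw [if_neg hlt]; simp
  refine ⟨hc0, fun i hi => ⟨hnormφ i hi, hnorminv i hi⟩, fun hn2 k hk1 hk2 i hik => ?_⟩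
  have hiN : i < N := by
    obtain ⟨q, hq⟩ : ∃ q, p = q + 2 := ⟨p - 2, by omega⟩
    have hpowle : p * (p - 1) ≤ N := by
      rw [hN]
      refine Nat.mul_le_mul_right _ ?_
      calc p = p ^ 1 := (pow_one p).symm
        _ ≤ p ^ (n - 1) := Nat.pow_le_pow_right hp.pos (by omega)
    have hq2 : p * (p - 1) = (q + 2) * (q + 1) := by subst hq; rfl
    have : i ≤ 2 * q + 1 := by omega
    nlinarith [hpowle, hq2]
  exact ⟨hnormφ i hiN, hnorminv i hiN⟩
end

section
/- Let p be a prime and k an integer with p+2 ≤ k ≤ 2p−1. Write (q/p)^{k−1} = Σ_{i≥0} g_i X^i in ℚ_p[[X]], where q = ((1+X)^p − 1)/X. Then: (i) g_i ∈ ℤ_p for 0 ≤ i ≤ p−2; (ii) g_{p−1} − (k−1)/p ∈ ℤ_p; and (iii) p·g_i ∈ ℤ_p for p ≤ i ≤ k−2. -/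
open PowerSeries
open Finset

/-- `q = q_1 = ((1+X)^p - 1)/X = Σ_{j=0}^{p-1} (1+X)^j`, viewed in `ℚ_p[[X]]`. -/
noncomputable def qOne (p : ℕ) [Fact p.Prime] : PowerSeries ℚ_[p] :=
  ∑ j ∈ Finset.range p, (1 + PowerSeries.X) ^ j

lemma sum_range_choose' (n k : ℕ) : ∑ j ∈ range n, j.choose k = n.choose (k+1) := by
  induction n with
  | zero => simp
  | succ n ih => rw [Finset.sum_range_succ, ih, Nat.choose_succ_succ', Nat.add_comm]

lemma integral_coeff_pow {p : ℕ} [Fact p.Prime] (f : PowerSeries ℚ_[p])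
    (hf : ∀ n, ‖(coeff (R := ℚ_[p]) n) f‖ ≤ 1) (m n : ℕ) : ‖(coeff (R := ℚ_[p]) n) (f ^ m)‖ ≤ 1 := by
  set W : PowerSeries ℤ_[p] := PowerSeries.mk (fun n => (⟨(coeff (R := ℚ_[p]) n) f, hf n⟩ : ℤ_[p]))
  have hW : PowerSeries.map (PadicInt.Coe.ringHom) W = f := by
    ext j
    rw [PowerSeries.coeff_map]; exact congrArg PadicInt.Coe.ringHom (PowerSeries.coeff_mk _ _)
  have : f ^ m = PowerSeries.map (PadicInt.Coe.ringHom) (W ^ m) := by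
    rw [map_pow, hW]
  rw [this, PowerSeries.coeff_map]
  exact PadicInt.norm_le_one _

lemma coeff_qOne {p : ℕ} [Fact p.Prime] (i : ℕ) :
    (coeff (R := ℚ_[p]) i) (qOne p) = (p.choose (i+1) : ℚ_[p]) := by
  rw [qOne, map_sum]
  have h : ∀ j, (coeff (R := ℚ_[p]) i) ((1 + PowerSeries.X) ^ j) = (j.choose i : ℚ_[p]) := by
    intro j
    have : ((1 + PowerSeries.X : PowerSeries ℚ_[p])) = ((1 + Polynomial.X : Polynomial ℚ_[p]) : PowerSeries ℚ_[p]) := by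
      simp
    rw [this, ← Polynomial.coe_pow, Polynomial.coeff_coe, Polynomial.coeff_one_add_X_pow]
  simp_rw [h]
  rw [← Nat.cast_sum, sum_range_choose']

lemma natCast_norm_le_one {p : ℕ} [Fact p.Prime] (n : ℕ) : ‖((n : ℕ) : ℚ_[p])‖ ≤ 1 := by
  have := Padic.norm_int_le_one (p := p) (n : ℤ)
  push_cast at this
  exact this

/-- Writing `(q/p)^(k-1) = Σ g_i X^i` with `p + 2 ≤ k ≤ 2p - 1`:
(i) `g_i ∈ ℤ_p` for `0 ≤ i ≤ p - 2`; (ii) `g_{p-1} - (k-1)/p ∈ ℤ_p`;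
(iii) `p · g_i ∈ ℤ_p` for `p ≤ i ≤ k - 2`. -/
theorem coeffs_of_q_over_p_pow (p : ℕ) [Fact p.Prime] (k : ℕ)
    (hk₁ : p + 2 ≤ k) (hk₂ : k ≤ 2 * p - 1) :
    (∀ i ≤ p - 2,
      ‖PowerSeries.coeff (R := ℚ_[p]) i (((p : ℚ_[p])⁻¹ • qOne p) ^ (k - 1))‖ ≤ 1) ∧
    ‖PowerSeries.coeff (R := ℚ_[p]) (p - 1) (((p : ℚ_[p])⁻¹ • qOne p) ^ (k - 1)) -
        ((k : ℚ_[p]) - 1) / (p : ℚ_[p])‖ ≤ 1 ∧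
    (∀ i, p ≤ i → i ≤ k - 2 →
      ‖(p : ℚ_[p]) * PowerSeries.coeff (R := ℚ_[p]) i (((p : ℚ_[p])⁻¹ • qOne p) ^ (k - 1))‖ ≤ 1) := by
  have hp2 : 2 ≤ p := (Fact.out : p.Prime).two_le
  obtain ⟨k', rfl⟩ : ∃ k', k = k' + 2 := ⟨k - 2, by omega⟩
  have hk' : p ≤ k' := by omega
  have hk'' : k' ≤ 2 * p - 3 := by omega
  set c : ℚ_[p] := (p : ℚ_[p])⁻¹ with hc
  have hp0 : (p : ℚ_[p]) ≠ 0 := Nat.cast_ne_zero.mpr (by omega)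
  set u : PowerSeries ℚ_[p] := c • (qOne p - PowerSeries.X ^ (p - 1)) with hu
  -- coefficients of u
  have hu_coeff : ∀ n, (coeff (R := ℚ_[p]) n) u =
      c * ((p.choose (n+1) : ℚ_[p]) - if n = p - 1 then 1 else 0) := by
    intro n
    rw [hu, PowerSeries.coeff_smul, map_sub, coeff_qOne, PowerSeries.coeff_X_pow, smul_eq_mul]
  have hu_int : ∀ n, ‖(coeff (R := ℚ_[p]) n) u‖ ≤ 1 := by
    intro n
    rcases lt_trichotomy n (p - 1) with h | h | h
    · -- n ≤ p - 2
      obtain ⟨t, ht⟩ : p ∣ p.choose (n + 1) :=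
        Nat.Prime.dvd_choose_self Fact.out (by omega) (by omega)
      have : (coeff (R := ℚ_[p]) n) u = (t : ℚ_[p]) := by
        rw [hu_coeff, if_neg (by omega), ht, sub_zero, hc]
        push_cast
        rw [← mul_assoc, inv_mul_cancel₀ hp0, one_mul]
      rw [this]; exact natCast_norm_le_one t
    · have : (coeff (R := ℚ_[p]) n) u = 0 := by
        rw [hu_coeff, if_pos h, h]
        have : p - 1 + 1 = p := by omega
        rw [this, Nat.choose_self]
        simp
      simp [this]
    · have : (coeff (R := ℚ_[p]) n) u = 0 := by
        rw [hu_coeff, if_neg (by omega), Nat.choose_eq_zero_of_lt (by omega)]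
        simp
      simp [this]
  have hu0 : constantCoeff (R := ℚ_[p]) u = 1 := by
    have h0 := hu_coeff 0
    rw [coeff_zero_eq_constantCoeff] at h0
    rw [h0, if_neg (by omega), Nat.choose_one_right, sub_zero, hc]
    exact inv_mul_cancel₀ hp0
  have hdecomp : (p : ℚ_[p])⁻¹ • qOne p = u + c • PowerSeries.X ^ (p - 1) := by
    rw [hu, smul_sub]; ring
  clear hu
  clear_value u
  -- key coefficient formula
  have key : ∀ i ≤ k', (coeff (R := ℚ_[p]) i) (((p : ℚ_[p])⁻¹ • qOne p) ^ (k' + 2 - 1)) =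
      (coeff (R := ℚ_[p]) i) (u ^ (k' + 1)) +
      ((k' + 1 : ℕ) : ℚ_[p]) * c *
        (if p - 1 ≤ i then (coeff (R := ℚ_[p]) (i - (p - 1))) (u ^ k') else 0) := by
    intro i hi
    have hterm : ∀ m : ℕ,
        (coeff (R := ℚ_[p]) i) (u ^ m * (c • PowerSeries.X ^ (p-1)) ^ (k' + 1 - m) *
          ((k'+1).choose m : PowerSeries ℚ_[p])) =
        (((k'+1).choose m : ℚ_[p])) * c ^ (k' + 1 - m) *
          (if (p-1) * (k' + 1 - m) ≤ i then (coeff (R := ℚ_[p]) (i - (p-1) * (k'+1-m))) (u ^ m) else 0) := by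
      intro m
      rw [smul_pow, ← pow_mul, mul_smul_comm, smul_mul_assoc, PowerSeries.coeff_smul,
        ← map_natCast (PowerSeries.C (R := ℚ_[p])) (((k'+1).choose m)), PowerSeries.coeff_mul_C,
        PowerSeries.coeff_mul_X_pow', smul_eq_mul]
      ring
    rw [hdecomp, show k' + 2 - 1 = k' + 1 by omega, add_pow]
    rw [show k' + 1 + 1 = (k' + 2) by omega, map_sum]
    rw [Finset.sum_range_succ, Finset.sum_range_succ]
    simp_rw [hterm]
    have hzero : ∀ m ∈ range k', (((k'+1).choose m : ℚ_[p])) * c ^ (k' + 1 - m) *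
        (if (p-1) * (k' + 1 - m) ≤ i then (coeff (R := ℚ_[p]) (i - (p-1) * (k'+1-m))) (u ^ m) else 0) = 0 := by
      intro m hm
      rw [Finset.mem_range] at hm
      rw [if_neg, mul_zero]
      have : 2 ≤ k' + 1 - m := by omega
      have : 2 * (p - 1) ≤ (p - 1) * (k' + 1 - m) := by
        calc 2 * (p-1) = (p-1) * 2 := by ring
        _ ≤ _ := Nat.mul_le_mul_left _ this
      omega
    rw [Finset.sum_eq_zero hzero]
    rw [show k' + 1 - (k' + 1) = 0 by omega, show k' + 1 - k' = 1 by omega]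
    simp only [Nat.choose_self, Nat.cast_one, pow_zero, Nat.mul_zero, Nat.zero_le, if_true,
      Nat.sub_zero, Nat.choose_succ_self_right, pow_one, mul_one, zero_add, one_mul]
    ring
  refine ⟨?_, ?_, ?_⟩
  · intro i hi
    rw [key i (by omega), if_neg (by omega), mul_zero, add_zero]
    exact integral_coeff_pow u hu_int _ _
  · rw [key (p-1) (by omega), if_pos (le_refl _), Nat.sub_self,
      coeff_zero_eq_constantCoeff,
      show (constantCoeff (R := ℚ_[p])) (u ^ k') = 1 by rw [map_pow, hu0, one_pow], mul_one]
    have : ((k' + 1 : ℕ) : ℚ_[p]) * c = (((k' + 2 : ℕ) : ℚ_[p]) - 1) / (p : ℚ_[p]) := by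
      rw [hc]; push_cast; ring
    rw [this, add_sub_cancel_right]
    exact integral_coeff_pow u hu_int _ _
  · intro i hpi hik
    rw [key i (by omega), if_pos (by omega), mul_add]
    have h1 : (p : ℚ_[p]) * (((k' + 1 : ℕ) : ℚ_[p]) * c *
        (coeff (R := ℚ_[p]) (i - (p - 1))) (u ^ k')) =
        ((k' + 1 : ℕ) : ℚ_[p]) * (coeff (R := ℚ_[p]) (i - (p - 1))) (u ^ k') := by
      rw [hc]
      field_simp
    rw [h1]
    refine le_trans (Padic.nonarchimedean _ _) (max_le ?_ ?_)
    · rw [Padic.padicNormE.mul]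
      calc ‖(p:ℚ_[p])‖ * ‖(coeff (R := ℚ_[p]) i) (u ^ (k'+1))‖
          ≤ 1 * 1 := mul_le_mul (natCast_norm_le_one p) (integral_coeff_pow u hu_int _ _)
            (norm_nonneg _) (by norm_num)
      _ = 1 := by norm_num
    · rw [Padic.padicNormE.mul]
      calc ‖((k'+1:ℕ):ℚ_[p])‖ * ‖(coeff (R := ℚ_[p]) (i - (p-1))) (u ^ k')‖
          ≤ 1 * 1 := mul_le_mul (natCast_norm_le_one _) (integral_coeff_pow u hu_int _ _)
            (norm_nonneg _) (by norm_num)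
      _ = 1 := by norm_num
end
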